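/- arXiv:1807.05955 — 4 statements merged into one kernel-verified Lean document; each statement's English description precedes it below -/
import Mathlib

section
/- Let G be a connected k-uniform hypergraph with two disjoint edges e = {u_1,...,u_k} and f = {v_1,...,v_k}, and let G' be obtained from G by replacing e, f with e' = (e \ U_1) ∪ V_1 and f' = (f \ V_1) ∪ U_1, where U_1 = {u_1,...,u_r}, V_1 = {v_1,...,v_r}, 1 ≤ r ≤ k-1, and U_2 = e \ U_1, V_2 = f \ V_1. Then for any nonnegative vector x, the difference of quadratic forms satisfies x^T(Q(G')x^{k-1}) − x^T(Q(G)x^{k-1}) = k·(x_{V_2} − x_{U_2})·(x_{U_1} − x_{V_1}), where x_{S} denotes Π_{v∈S} x_v. In particular, if x_{U_1} ≥ x_{V_1} and x_{U_2} ≤ x_{V_2}, this difference is nonnegative. -/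
open scoped Classical BigOperators

namespace SLT

variable {V : Type*}

/-- A hypergraph (edge set over vertex type `V`) is `k`-uniform if every edge has exactly `k` vertices. -/
def IsUniform (k : ℕ) (E : Finset (Finset V)) : Prop :=
  ∀ e ∈ E, e.card = k

/-- The degree of a vertex: the number of edges containing it. -/
noncomputable def degree (E : Finset (Finset V)) (v : V) : ℕ :=
  (E.filter (fun e => v ∈ e)).card

/-- `Chains vs es` : the alternating sequence of vertices `vs` and edges `es` forms a
walk, i.e. consecutive vertices both lie in the corresponding edge. -/
def Chains : List V → List (Finset V) → Prop
  | [_], [] => True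
  | u :: v :: vs, e :: es => u ∈ e ∧ v ∈ e ∧ Chains (v :: vs) es
  | _, _ => False

/-- A path in a hypergraph: distinct vertices, distinct edges, all edges in `E`,
with consecutive vertices in the corresponding edge. -/
def IsPath (E : Finset (Finset V)) (vs : List V) (es : List (Finset V)) : Prop :=
  vs.Nodup ∧ es.Nodup ∧ (∀ e ∈ es, e ∈ E) ∧ Chains vs es

/-- A hypergraph is connected if any two vertices are joined by a path. -/
def HConnected (E : Finset (Finset V)) : Prop :=
  ∀ u v : V, ∃ vs es, IsPath E vs es ∧ vs.head? = some u ∧ vs.getLast? = some v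

/-- A cycle: at least two distinct edges, distinct vertices, closing up at the first vertex. -/
def IsCycle (E : Finset (Finset V)) (vs : List V) (es : List (Finset V)) : Prop :=
  2 ≤ es.length ∧ vs.Nodup ∧ es.Nodup ∧ (∀ e ∈ es, e ∈ E) ∧
  ∃ u, vs.head? = some u ∧ Chains (vs ++ [u]) es

/-- A `k`-uniform supertree: connected and acyclic `k`-uniform hypergraph. -/
def IsSupertree (k : ℕ) (E : Finset (Finset V)) : Prop :=
  IsUniform k E ∧ HConnected E ∧ ∀ vs es, ¬ IsCycle E vs es

/-- The quadratic form `x^T (Q(G) x^{k-1})` of the signless Laplacian tensor of a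
`k`-uniform hypergraph. -/
noncomputable def qform (k : ℕ) (E : Finset (Finset V)) (x : V → ℝ) : ℝ :=
  ∑ e ∈ E, ((∑ i ∈ e, x i ^ k) + k * ∏ i ∈ e, x i)

/-- The `i`-th component of `Q(G) x^{k-1}` for a `k`-uniform hypergraph. -/
noncomputable def Qcomp (k : ℕ) (E : Finset (Finset V)) (x : V → ℝ) (i : V) : ℝ :=
  ∑ e ∈ E.filter (fun e => i ∈ e), (x i ^ (k-1) + ∏ j ∈ e.erase i, x j)

/-- The signless Laplacian spectral radius `q(G)`, via Qi's variational characterization: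
the supremum of the quadratic form over nonnegative vectors with `∑ x_v^k = 1`. -/
noncomputable def qrad [Fintype V] (k : ℕ) (E : Finset (Finset V)) : ℝ :=
  sSup {r | ∃ x : V → ℝ, (∀ v, 0 ≤ x v) ∧ (∑ v, x v ^ k) = 1 ∧ r = qform k E x}

/-- `x` is the principal eigenvector of `Q(G)`: positive, unit (`∑ x_v^k = 1`), and an
eigenvector for the eigenvalue `q(G)`. -/
def IsPrincipalEig [Fintype V] (k : ℕ) (E : Finset (Finset V)) (x : V → ℝ) : Prop :=
  (∀ v, 0 < x v) ∧ (∑ v, x v ^ k) = 1 ∧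
  ∀ i, Qcomp k E x i = qrad k E * x i ^ (k-1)

/-- the 2-switch identity for the signless Laplacian quadratic form, and
its nonnegativity under the product hypotheses. -/
theorem two_switch_qform (k r : ℕ) (hr1 : 1 ≤ r) (hrk : r ≤ k - 1)
    {V : Type*} [Fintype V] [DecidableEq V]
    (E : Finset (Finset V)) (hu : IsUniform k E) (hc : HConnected E)
    (e f : Finset V) (he : e ∈ E) (hf : f ∈ E) (hef : Disjoint e f)
    (U1 V1 : Finset V) (hU1 : U1 ⊆ e) (hV1 : V1 ⊆ f)
    (hU1c : U1.card = r) (hV1c : V1.card = r)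
    (e' f' : Finset V) (he' : e' = (e \ U1) ∪ V1) (hf' : f' = (f \ V1) ∪ U1)
    (he'E : e' ∉ E) (hf'E : f' ∉ E) (he'f' : e' ≠ f')
    (E' : Finset (Finset V)) (hE' : E' = (E \ {e, f}) ∪ {e', f'})
    (x : V → ℝ) (hx : ∀ v, 0 ≤ x v) :
    qform k E' x - qform k E x
        = k * ((∏ v ∈ f \ V1, x v) - (∏ v ∈ e \ U1, x v))
            * ((∏ v ∈ U1, x v) - (∏ v ∈ V1, x v)) ∧
      ((∏ v ∈ V1, x v) ≤ (∏ v ∈ U1, x v) → (∏ v ∈ e \ U1, x v) ≤ (∏ v ∈ f \ V1, x v) →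
        0 ≤ qform k E' x - qform k E x) := by
  have hk2 : 2 ≤ k := by omega
  have hene : e.Nonempty := by
    rw [← Finset.card_pos, hu e he]; omega
  have hef' : e ≠ f := by
    rintro rfl
    exact hene.ne_empty (Finset.disjoint_self_iff_empty e |>.mp hef)
  -- disjointness facts
  have d1 : Disjoint (e \ U1) U1 := Finset.sdiff_disjoint
  have d2 : Disjoint (f \ V1) V1 := Finset.sdiff_disjoint
  have d3 : Disjoint (e \ U1) V1 :=
    (hef.mono (Finset.sdiff_subset) hV1)
  have d4 : Disjoint (f \ V1) U1 :=
    (hef.symm.mono (Finset.sdiff_subset) hU1)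
  have hee : e \ U1 ∪ U1 = e := Finset.sdiff_union_of_subset hU1
  have hff : f \ V1 ∪ V1 = f := Finset.sdiff_union_of_subset hV1
  -- term of an edge
  set T : Finset V → ℝ := fun s => (∑ i ∈ s, x i ^ k) + k * ∏ i ∈ s, x i with hT
  have hsum' : qform k E' x = (∑ s ∈ E \ {e, f}, T s) + (T e' + T f') := by
    rw [qform, hE', Finset.sum_union, Finset.sum_pair he'f']
    simp only [Finset.disjoint_right, Finset.mem_insert, Finset.mem_singleton,
      Finset.mem_sdiff]
    rintro a (rfl | rfl) ⟨ha, _⟩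
    · exact he'E ha
    · exact hf'E ha
  have hsum : qform k E x = (∑ s ∈ E \ {e, f}, T s) + (T e + T f) := by
    rw [qform, ← Finset.sum_sdiff (show {e, f} ⊆ E by
      intro a ha
      simp only [Finset.mem_insert, Finset.mem_singleton] at ha
      rcases ha with rfl | rfl <;> assumption), Finset.sum_pair hef']
  -- sums of powers
  have hSe : (∑ i ∈ e, x i ^ k) = (∑ i ∈ e \ U1, x i ^ k) + ∑ i ∈ U1, x i ^ k := by
    rw [← Finset.sum_union d1, hee]
  have hSf : (∑ i ∈ f, x i ^ k) = (∑ i ∈ f \ V1, x i ^ k) + ∑ i ∈ V1, x i ^ k := by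
    rw [← Finset.sum_union d2, hff]
  have hS : (∑ i ∈ e', x i ^ k) + (∑ i ∈ f', x i ^ k)
      = (∑ i ∈ e, x i ^ k) + (∑ i ∈ f, x i ^ k) := by
    rw [he', hf', Finset.sum_union d3, Finset.sum_union d4, hSe, hSf]
    ring
  -- products
  have hPe : (∏ i ∈ e, x i) = (∏ i ∈ e \ U1, x i) * ∏ i ∈ U1, x i := by
    rw [← Finset.prod_union d1, hee]
  have hPf : (∏ i ∈ f, x i) = (∏ i ∈ f \ V1, x i) * ∏ i ∈ V1, x i := by
    rw [← Finset.prod_union d2, hff]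
  have hPe' : (∏ i ∈ e', x i) = (∏ i ∈ e \ U1, x i) * ∏ i ∈ V1, x i := by
    rw [he', Finset.prod_union d3]
  have hPf' : (∏ i ∈ f', x i) = (∏ i ∈ f \ V1, x i) * ∏ i ∈ U1, x i := by
    rw [hf', Finset.prod_union d4]
  have key : qform k E' x - qform k E x
      = k * ((∏ v ∈ f \ V1, x v) - (∏ v ∈ e \ U1, x v))
          * ((∏ v ∈ U1, x v) - (∏ v ∈ V1, x v)) := by
    rw [hsum', hsum]
    have : T e' + T f' - (T e + T f)
        = k * ((∏ v ∈ f \ V1, x v) - (∏ v ∈ e \ U1, x v))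
          * ((∏ v ∈ U1, x v) - (∏ v ∈ V1, x v)) := by
      simp only [hT]
      rw [hPe, hPf, hPe', hPf']
      have := hS
      nlinarith [hS]
    linarith
  refine ⟨key, fun h1 h2 => ?_⟩
  rw [key]
  exact mul_nonneg (mul_nonneg (by positivity) (by linarith)) (by linarith)

end SLT
end

section
/- Let G be a connected k-uniform hypergraph and G' obtained from G by a 2-switch e ⇌ f exchanging U_1 ⊂ e for V_1 ⊂ f (with e ∩ f = ∅, |U_1| = |V_1| = r, 1 ≤ r ≤ k−1). Let x be the positive principal eigenvector of Q(G) with Σ x_i^k = 1. If x_{U_1} ≥ x_{V_1} and x_{U_2} ≤ x_{V_2} (where U_2 = e\U_1, V_2 = f\V_1, and x_S = Π_{v∈S} x_v), then q(G) ≤ q(G'), where q denotes the signless Laplacian spectral radius. Moreover, if one of the two inequalities is strict, then q(G) < q(G'). -/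
open scoped Classical BigOperators

namespace SLT

variable {V : Type*}

lemma Qcomp_ite [DecidableEq V] (k : ℕ) (E : Finset (Finset V)) (x : V → ℝ) (i : V) :
    Qcomp k E x i = ∑ e ∈ E, (if i ∈ e then x i ^ (k-1) + ∏ j ∈ e.erase i, x j else 0) := by
  unfold Qcomp
  rw [Finset.sum_filter]
  congr!

lemma sum_split [DecidableEq V] {E E' : Finset (Finset V)} {e f e' f' : Finset V}
    (he : e ∈ E) (hf : f ∈ E) (hef : e ≠ f) (he'E : e' ∉ E) (hf'E : f' ∉ E)
    (he'f' : e' ≠ f') (hE' : E' = (E \ {e, f}) ∪ {e', f'}) (F : Finset V → ℝ) :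
    ∑ g ∈ E', F g + F e + F f = ∑ g ∈ E, F g + F e' + F f' := by
  subst hE'
  have hd : Disjoint (E \ {e, f}) ({e', f'} : Finset (Finset V)) := by
    rw [Finset.disjoint_right]
    intro g hg
    simp only [Finset.mem_insert, Finset.mem_singleton] at hg
    rcases hg with rfl | rfl
    · exact fun h => he'E (Finset.mem_sdiff.mp h).1
    · exact fun h => hf'E (Finset.mem_sdiff.mp h).1
  have hsub : ({e, f} : Finset (Finset V)) ⊆ E := by
    intro g hg; simp only [Finset.mem_insert, Finset.mem_singleton] at hg
    rcases hg with rfl | rfl <;> assumption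
  rw [Finset.sum_union hd, Finset.sum_pair he'f']
  have h2 := Finset.sum_sdiff (f := F) hsub
  rw [Finset.sum_pair hef] at h2
  linarith

lemma qform_smul {k : ℕ} {E : Finset (Finset V)} (hu : IsUniform k E) (c : ℝ) (x : V → ℝ) :
    qform k E (fun v => c * x v) = c ^ k * qform k E x := by
  unfold qform
  rw [Finset.mul_sum]
  refine Finset.sum_congr rfl fun e heE => ?_
  have h1 : ∑ i ∈ e, (c * x i)^k = c^k * ∑ i ∈ e, x i ^ k := by
    rw [Finset.mul_sum]; exact Finset.sum_congr rfl fun i _ => mul_pow c (x i) k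
  have h2 : ∏ i ∈ e, (c * x i) = c ^ k * ∏ i ∈ e, x i := by
    rw [Finset.prod_mul_distrib, Finset.prod_const, hu e heE]
  rw [h1, h2]; ring

lemma bddAbove_qset [Fintype V] {k : ℕ} (hk : 1 ≤ k) {E : Finset (Finset V)}
    (hu : IsUniform k E) :
    BddAbove {r | ∃ x : V → ℝ, (∀ v, 0 ≤ x v) ∧ (∑ v, x v ^ k) = 1 ∧ r = qform k E x} := by
  refine ⟨(E.card : ℝ) * (k + k), ?_⟩
  rintro r ⟨x, hx0, hx1, rfl⟩
  have hle1 : ∀ v, x v ≤ 1 := by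
    intro v
    have h := Finset.single_le_sum (f := fun v => x v ^ k)
      (fun v _ => pow_nonneg (hx0 v) k) (Finset.mem_univ v)
    rw [hx1] at h
    exact (pow_le_one_iff_of_nonneg (hx0 v) (by omega)).mp h
  have hterm : ∀ e ∈ E, (∑ i ∈ e, x i ^ k) + k * ∏ i ∈ e, x i ≤ (k : ℝ) + k := by
    intro e heE
    have hs : ∑ i ∈ e, x i ^ k ≤ ∑ i ∈ e, (1:ℝ) :=
      Finset.sum_le_sum fun i _ => pow_le_one₀ (hx0 i) (hle1 i)
    rw [Finset.sum_const, hu e heE, nsmul_eq_mul, mul_one] at hs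
    have hp : ∏ i ∈ e, x i ≤ 1 :=
      Finset.prod_le_one (fun i _ => hx0 i) (fun i _ => hle1 i)
    have hk0 : (0:ℝ) ≤ k := Nat.cast_nonneg k
    nlinarith
  calc qform k E x ≤ ∑ _e ∈ E, ((k:ℝ) + k) := Finset.sum_le_sum hterm
    _ = (E.card : ℝ) * (k + k) := by rw [Finset.sum_const, nsmul_eq_mul]

lemma qform_mem_qset [Fintype V] {k : ℕ} {E : Finset (Finset V)} {x : V → ℝ}
    (hx0 : ∀ v, 0 ≤ x v) (hx1 : (∑ v, x v ^ k) = 1) :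
    qform k E x ∈ {r | ∃ x : V → ℝ, (∀ v, 0 ≤ x v) ∧ (∑ v, x v ^ k) = 1 ∧ r = qform k E x} :=
  ⟨x, hx0, hx1, rfl⟩

lemma qform_le_qrad [Fintype V] {k : ℕ} (hk : 1 ≤ k) {E : Finset (Finset V)}
    (hu : IsUniform k E) {x : V → ℝ} (hx0 : ∀ v, 0 ≤ x v) (hx1 : (∑ v, x v ^ k) = 1) :
    qform k E x ≤ qrad k E :=
  le_csSup (bddAbove_qset hk hu) (qform_mem_qset hx0 hx1)

lemma sum_mul_Qcomp [Fintype V] [DecidableEq V] {k : ℕ} (hk : 1 ≤ k)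
    {E : Finset (Finset V)} (hu : IsUniform k E) (x : V → ℝ) :
    ∑ v, x v * Qcomp k E x v = qform k E x := by
  have key : ∀ v : V, x v * Qcomp k E x v
      = ∑ e ∈ E, (if v ∈ e then (x v ^ k + ∏ j ∈ e, x j) else 0) := by
    intro v
    rw [Qcomp_ite, Finset.mul_sum]
    refine Finset.sum_congr rfl fun e _ => ?_
    split_ifs with hv
    · rw [mul_add]
      congr 1
      · rw [← pow_succ', Nat.sub_add_cancel hk]
      · exact Finset.mul_prod_erase e x hv
    · exact mul_zero _
  refine (Finset.sum_congr rfl fun v _ => key v).trans ?_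
  rw [Finset.sum_comm]
  refine Finset.sum_congr rfl fun e heE => ?_
  rw [← Finset.sum_filter, Finset.filter_univ_mem, Finset.sum_add_distrib,
    Finset.sum_const, hu e heE, nsmul_eq_mul]

lemma qrad_eq_qform [Fintype V] [DecidableEq V] {k : ℕ} (hk : 1 ≤ k)
    {E : Finset (Finset V)} (hu : IsUniform k E) {x : V → ℝ}
    (hx : IsPrincipalEig k E x) : qrad k E = qform k E x := by
  obtain ⟨hpos, hsum, heig⟩ := hx
  have h1 : ∑ v, x v * Qcomp k E x v = qrad k E := by
    have : ∀ v : V, x v * Qcomp k E x v = qrad k E * x v ^ k := by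
      intro v
      rw [heig v, mul_left_comm]
      congr 1
      rw [← pow_succ', Nat.sub_add_cancel hk]
    rw [Finset.sum_congr rfl fun v _ => this v, ← Finset.mul_sum, hsum, mul_one]
  rw [← h1, sum_mul_Qcomp hk hu]

lemma qform_le_qrad_mul [Fintype V] {k : ℕ} (hk : 1 ≤ k) {E : Finset (Finset V)}
    (hu : IsUniform k E) (y : V → ℝ) (hy : ∀ v, 0 ≤ y v) (hN : 0 < ∑ v, y v ^ k) :
    qform k E y ≤ qrad k E * ∑ v, y v ^ k := by
  set N := ∑ v, y v ^ k with hNdef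
  have hkR : (k:ℝ) ≠ 0 := by
    have : (0:ℝ) < k := by exact_mod_cast Nat.lt_of_lt_of_le Nat.zero_lt_one hk
    exact ne_of_gt this
  set c : ℝ := (N ^ ((1:ℝ)/k))⁻¹ with hc
  have hck : c ^ k = N⁻¹ := by
    rw [hc, inv_pow, ← Real.rpow_natCast (N ^ ((1:ℝ)/k)) k, ← Real.rpow_mul hN.le,
      one_div, inv_mul_cancel₀ hkR, Real.rpow_one]
  have hc0 : 0 ≤ c := inv_nonneg.2 (Real.rpow_nonneg hN.le _)
  have hz : (∑ v, (c * y v) ^ k) = 1 := by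
    have : ∀ v : V, (c * y v) ^ k = c ^ k * y v ^ k := fun v => mul_pow c (y v) k
    rw [Finset.sum_congr rfl fun v _ => this v, ← Finset.mul_sum, ← hNdef, hck,
      inv_mul_cancel₀ hN.ne']
  have hle : qform k E (fun v => c * y v) ≤ qrad k E :=
    qform_le_qrad hk hu (fun v => mul_nonneg hc0 (hy v)) hz
  rw [qform_smul hu c y, hck] at hle
  have := mul_le_mul_of_nonneg_left hle hN.le
  rw [← mul_assoc, mul_inv_cancel₀ hN.ne', one_mul] at this
  linarith [this, mul_comm (qrad k E) N]

lemma eig_of_max [Fintype V] [DecidableEq V] {k : ℕ} (hk : 2 ≤ k)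
    {E : Finset (Finset V)} (hu : IsUniform k E) {x : V → ℝ}
    (hpos : ∀ v, 0 < x v) (hsum : ∑ v, x v ^ k = 1)
    (hmax : qform k E x = qrad k E) (i : V) (hvi : ∃ v, v ≠ i ∧ (0:ℝ) < x v) :
    Qcomp k E x i = qrad k E * x i ^ (k-1) := by
  have hk1 : 1 ≤ k := by omega
  set q := qrad k E with hq
  set d : ℝ := ((E.filter (fun e => i ∈ e)).card : ℝ) with hd
  set P : ℝ := ∑ g ∈ E.filter (fun e => i ∈ e), ∏ j ∈ g.erase i, x j with hP
  -- the update computations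
  have hupdate : ∀ s : ℝ, 0 ≤ s →
      qform k E (Function.update x i s) = qform k E x + d * (s ^ k - x i ^ k)
        + (k:ℝ) * (s - x i) * P ∧
      (∑ v, Function.update x i s v ^ k) = 1 - x i ^ k + s ^ k := by
    intro s hs
    constructor
    · have key : ∀ g ∈ E, ((∑ j ∈ g, Function.update x i s j ^ k)
          + k * ∏ j ∈ g, Function.update x i s j)
          = ((∑ j ∈ g, x j ^ k) + k * ∏ j ∈ g, x j)
            + (if i ∈ g then (s ^ k - x i ^ k) + (k:ℝ) * (s - x i) * ∏ j ∈ g.erase i, x j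
               else 0) := by
        intro g hg
        by_cases hig : i ∈ g
        · rw [if_pos hig]
          have hsumg : ∑ j ∈ g, Function.update x i s j ^ k
              = s ^ k + ∑ j ∈ g \ {i}, x j ^ k := by
            have : ∀ j : V, Function.update x i s j ^ k
                = Function.update (fun v => x v ^ k) i (s ^ k) j := by
              intro j
              by_cases hj : j = i
              · subst hj; simp
              · simp [Function.update_of_ne hj]
            rw [Finset.sum_congr rfl fun j _ => this j, Finset.sum_update_of_mem hig]
          have hsumg2 : ∑ j ∈ g, x j ^ k = x i ^ k + ∑ j ∈ g \ {i}, x j ^ k := by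
            rw [← Finset.sum_update_of_mem hig]
            exact Finset.sum_congr rfl fun j _ => by
              by_cases hj : j = i
              · subst hj; simp
              · simp [Function.update_of_ne hj]
          have hprodg : ∏ j ∈ g, Function.update x i s j = s * ∏ j ∈ g.erase i, x j := by
            rw [Finset.prod_update_of_mem hig, Finset.sdiff_singleton_eq_erase]
          have hprodg2 : ∏ j ∈ g, x j = x i * ∏ j ∈ g.erase i, x j :=
            (Finset.mul_prod_erase g x hig).symm
          rw [hsumg, hsumg2, hprodg, hprodg2]
          ring
        · rw [if_neg hig]
          have h1 : ∀ j ∈ g, Function.update x i s j = x j := fun j hj =>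
            Function.update_of_ne (by rintro rfl; exact hig hj) _ _
          rw [Finset.sum_congr rfl fun j hj => by rw [h1 j hj],
            Finset.prod_congr rfl h1, add_zero]
      unfold qform
      rw [Finset.sum_congr rfl key, Finset.sum_add_distrib, ← Finset.sum_filter]
      have : ∑ g ∈ E.filter (fun e => i ∈ e),
          ((s ^ k - x i ^ k) + (k:ℝ) * (s - x i) * ∏ j ∈ g.erase i, x j)
          = d * (s ^ k - x i ^ k) + (k:ℝ) * (s - x i) * P := by
        rw [Finset.sum_add_distrib, Finset.sum_const, nsmul_eq_mul, hP, Finset.mul_sum, hd]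
      rw [this]
      ring
    · have : ∀ j : V, Function.update x i s j ^ k
          = Function.update (fun v => x v ^ k) i (s ^ k) j := by
        intro j
        by_cases hj : j = i
        · subst hj; simp
        · simp [Function.update_of_ne hj]
      rw [Finset.sum_congr rfl fun j _ => this j,
        Finset.sum_update_of_mem (Finset.mem_univ i)]
      have h2 : ∑ v ∈ Finset.univ \ {i}, x v ^ k = 1 - x i ^ k := by
        have := Finset.sum_sdiff (f := fun v => x v ^ k)
          (Finset.singleton_subset_iff.mpr (Finset.mem_univ i))
        rw [Finset.sum_singleton, hsum] at this
        linarith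
      rw [h2]; ring
  -- the one-variable function
  have hphi : ∀ s : ℝ, 0 ≤ s →
      (d - q) * s ^ k + (k:ℝ) * P * s ≤ (d - q) * x i ^ k + (k:ℝ) * P * x i := by
    intro s hs
    obtain ⟨hq1, hq2⟩ := hupdate s hs
    have hy0 : ∀ v, 0 ≤ Function.update x i s v := by
      intro v
      by_cases hv : v = i
      · subst hv; simp [hs]
      · simp [Function.update_of_ne hv, (hpos v).le]
    have hNpos : 0 < ∑ v, Function.update x i s v ^ k := by
      obtain ⟨w, hwne, hwpos⟩ := hvi
      have h1 : Function.update x i s w ^ k = x w ^ k := by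
        rw [Function.update_of_ne hwne]
      have h2 : x w ^ k ≤ ∑ v, Function.update x i s v ^ k := by
        rw [← h1]
        exact Finset.single_le_sum (f := fun v => Function.update x i s v ^ k)
          (fun v _ => pow_nonneg (hy0 v) k) (Finset.mem_univ w)
      have := pow_pos hwpos k
      linarith
    have hle := qform_le_qrad_mul hk1 hu (Function.update x i s) hy0 hNpos
    rw [hq1, hq2] at hle
    rw [hmax] at hle
    nlinarith [hle]
  -- local max at x i > 0
  have hlm : IsLocalMax (fun s => (d - q) * s ^ k + (k:ℝ) * P * s) (x i) := by
    filter_upwards [Ioi_mem_nhds (hpos i)] with s hs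
    exact hphi s (le_of_lt hs)
  have hD : HasDerivAt (fun s => (d - q) * s ^ k + (k:ℝ) * P * s)
      ((d - q) * ((k:ℝ) * x i ^ (k-1)) + (k:ℝ) * P) (x i) := by
    have h1 := (hasDerivAt_pow k (x i)).const_mul (d - q)
    have h2 : HasDerivAt (fun s : ℝ => (k:ℝ) * P * s) ((k:ℝ) * P) (x i) := by
      simpa using (hasDerivAt_id (x i)).const_mul ((k:ℝ) * P)
    exact h1.add h2
  have hzero := hlm.hasDerivAt_eq_zero hD
  -- conclude
  have hkpos : (0:ℝ) < k := by exact_mod_cast Nat.lt_of_lt_of_le Nat.zero_lt_one hk1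
  have hQ : Qcomp k E x i = d * x i ^ (k-1) + P := by
    rw [Qcomp_ite]
    have hsplit : ∀ g ∈ E, (if i ∈ g then x i ^ (k-1) + ∏ j ∈ g.erase i, x j else 0)
        = (if i ∈ g then x i ^ (k-1) else 0) + (if i ∈ g then ∏ j ∈ g.erase i, x j else 0) := by
      intro g _; split_ifs <;> simp
    rw [Finset.sum_congr rfl hsplit, Finset.sum_add_distrib, ← Finset.sum_filter,
      ← Finset.sum_filter, Finset.sum_const, nsmul_eq_mul, hd, hP]
  have hfinal : d * x i ^ (k-1) + P = q * x i ^ (k-1) := by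
    have h := hzero
    have : (k:ℝ) * ((d - q) * x i ^ (k-1) + P) = 0 := by ring_nf; ring_nf at h; linarith
    have h2 := mul_eq_zero.mp this
    rcases h2 with h2 | h2
    · exact absurd h2 (ne_of_gt hkpos)
    · linarith [h2]
  rw [hQ, hfinal, hq]

/-- the 2-switch lemma for the signless Laplacian spectral radius. -/
theorem two_switch_qrad (k r : ℕ) (hr1 : 1 ≤ r) (hrk : r ≤ k - 1)
    {V : Type*} [Fintype V] [DecidableEq V]
    (E : Finset (Finset V)) (hu : IsUniform k E) (hc : HConnected E)
    (e f : Finset V) (he : e ∈ E) (hf : f ∈ E) (hef : Disjoint e f)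
    (U1 V1 : Finset V) (hU1 : U1 ⊆ e) (hV1 : V1 ⊆ f)
    (hU1c : U1.card = r) (hV1c : V1.card = r)
    (e' f' : Finset V) (he' : e' = (e \ U1) ∪ V1) (hf' : f' = (f \ V1) ∪ U1)
    (he'E : e' ∉ E) (hf'E : f' ∉ E) (he'f' : e' ≠ f')
    (E' : Finset (Finset V)) (hE' : E' = (E \ {e, f}) ∪ {e', f'})
    (hc' : HConnected E')
    (x : V → ℝ) (hx : IsPrincipalEig k E x)
    (h1 : (∏ v ∈ V1, x v) ≤ (∏ v ∈ U1, x v))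
    (h2 : (∏ v ∈ e \ U1, x v) ≤ (∏ v ∈ f \ V1, x v)) :
    qrad k E ≤ qrad k E' ∧
      ((∏ v ∈ V1, x v) < (∏ v ∈ U1, x v) ∨ (∏ v ∈ e \ U1, x v) < (∏ v ∈ f \ V1, x v) →
        qrad k E < qrad k E') := by
  obtain ⟨hpos, hsum, heig⟩ := hx
  have hk2 : 2 ≤ k := by omega
  have hk1 : 1 ≤ k := by omega
  have hec : e.card = k := hu e he
  have hfc : f.card = k := hu f hf
  have hene : e.Nonempty := by rw [← Finset.card_pos, hec]; omega
  have hefne : e ≠ f := by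
    rintro rfl
    obtain ⟨w, hw⟩ := hene
    exact (Finset.disjoint_left.mp hef hw) hw
  have hdis1 : Disjoint (e \ U1) U1 := Finset.sdiff_disjoint
  have hdis2 : Disjoint (f \ V1) V1 := Finset.sdiff_disjoint
  have hdis3 : Disjoint (e \ U1) V1 := hef.mono Finset.sdiff_subset hV1
  have hdis4 : Disjoint (f \ V1) U1 := hef.symm.mono Finset.sdiff_subset hU1
  have hcE1 : (e \ U1).card = k - r := by rw [Finset.card_sdiff_of_subset hU1, hec, hU1c]
  have hcF1 : (f \ V1).card = k - r := by rw [Finset.card_sdiff_of_subset hV1, hfc, hV1c]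
  have he'c : e'.card = k := by
    rw [he', Finset.card_union_of_disjoint hdis3, hcE1, hV1c]; omega
  have hf'c : f'.card = k := by
    rw [hf', Finset.card_union_of_disjoint hdis4, hcF1, hU1c]; omega
  have hE'u : IsUniform k E' := by
    intro g hg
    rw [hE', Finset.mem_union] at hg
    rcases hg with hg | hg
    · exact hu g (Finset.mem_sdiff.mp hg).1
    · simp only [Finset.mem_insert, Finset.mem_singleton] at hg
      rcases hg with rfl | rfl
      · exact he'c
      · exact hf'c
  have hprod_e : ∏ v ∈ e, x v = (∏ v ∈ e \ U1, x v) * ∏ v ∈ U1, x v := by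
    rw [← Finset.prod_union hdis1, Finset.sdiff_union_of_subset hU1]
  have hprod_f : ∏ v ∈ f, x v = (∏ v ∈ f \ V1, x v) * ∏ v ∈ V1, x v := by
    rw [← Finset.prod_union hdis2, Finset.sdiff_union_of_subset hV1]
  have hprod_e' : ∏ v ∈ e', x v = (∏ v ∈ e \ U1, x v) * ∏ v ∈ V1, x v := by
    rw [he', Finset.prod_union hdis3]
  have hprod_f' : ∏ v ∈ f', x v = (∏ v ∈ f \ V1, x v) * ∏ v ∈ U1, x v := by
    rw [hf', Finset.prod_union hdis4]
  have hse : ∑ i ∈ e, x i ^ k = (∑ i ∈ e \ U1, x i ^ k) + ∑ i ∈ U1, x i ^ k := by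
    rw [← Finset.sum_union hdis1, Finset.sdiff_union_of_subset hU1]
  have hsf : ∑ i ∈ f, x i ^ k = (∑ i ∈ f \ V1, x i ^ k) + ∑ i ∈ V1, x i ^ k := by
    rw [← Finset.sum_union hdis2, Finset.sdiff_union_of_subset hV1]
  have hse' : ∑ i ∈ e', x i ^ k = (∑ i ∈ e \ U1, x i ^ k) + ∑ i ∈ V1, x i ^ k := by
    rw [he', Finset.sum_union hdis3]
  have hsf' : ∑ i ∈ f', x i ^ k = (∑ i ∈ f \ V1, x i ^ k) + ∑ i ∈ U1, x i ^ k := by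
    rw [hf', Finset.sum_union hdis4]
  have hS : (∑ i ∈ e', x i ^ k) + (∑ i ∈ f', x i ^ k)
      = (∑ i ∈ e, x i ^ k) + (∑ i ∈ f, x i ^ k) := by
    rw [hse, hsf, hse', hsf']; ring
  -- qform difference
  have hq' : qform k E' x = qform k E x
      + (k:ℝ) * (((∏ v ∈ U1, x v) - ∏ v ∈ V1, x v)
        * ((∏ v ∈ f \ V1, x v) - ∏ v ∈ e \ U1, x v)) := by
    have hsp : qform k E' x + ((∑ i ∈ e, x i ^ k) + (k:ℝ) * ∏ i ∈ e, x i)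
          + ((∑ i ∈ f, x i ^ k) + (k:ℝ) * ∏ i ∈ f, x i)
        = qform k E x + ((∑ i ∈ e', x i ^ k) + (k:ℝ) * ∏ i ∈ e', x i)
          + ((∑ i ∈ f', x i ^ k) + (k:ℝ) * ∏ i ∈ f', x i) :=
      sum_split he hf hefne he'E hf'E he'f' hE'
        (fun g => (∑ i ∈ g, x i ^ k) + (k:ℝ) * ∏ i ∈ g, x i)
    rw [hprod_e, hprod_f, hprod_e', hprod_f'] at hsp
    linear_combination hsp + hS
  have hqE : qrad k E = qform k E x := qrad_eq_qform hk1 hu ⟨hpos, hsum, heig⟩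
  have hmem' : qform k E' x ≤ qrad k E' :=
    qform_le_qrad hk1 hE'u (fun v => (hpos v).le) hsum
  have hknn : (0:ℝ) ≤ (k:ℝ) * (((∏ v ∈ U1, x v) - ∏ v ∈ V1, x v)
      * ((∏ v ∈ f \ V1, x v) - ∏ v ∈ e \ U1, x v)) :=
    mul_nonneg (Nat.cast_nonneg k)
      (mul_nonneg (sub_nonneg.2 h1) (sub_nonneg.2 h2))
  have hle : qrad k E ≤ qrad k E' := by rw [hqE]; linarith
  refine ⟨hle, ?_⟩
  intro hstrict
  by_contra hcon
  push_neg at hcon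
  have heq : qrad k E' = qrad k E := le_antisymm hcon hle
  have hmax' : qform k E' x = qrad k E' := by
    refine le_antisymm hmem' ?_
    rw [heq, hqE]; linarith
  have hvi : ∀ i : V, ∃ v, v ≠ i ∧ (0:ℝ) < x v := by
    intro i
    obtain ⟨w1, hw1, w2, hw2, hne⟩ := Finset.one_lt_card.mp
      (show 1 < e.card by rw [hec]; omega)
    by_cases hwi : w1 = i
    · exact ⟨w2, by rw [← hwi]; exact fun h => hne h.symm, hpos w2⟩
    · exact ⟨w1, hwi, hpos w1⟩
  have heig' : ∀ i, Qcomp k E' x i = qrad k E * x i ^ (k-1) := by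
    intro i
    rw [← heq]
    exact eig_of_max hk2 hE'u hpos hsum hmax' i (hvi i)
  -- general Qcomp comparison
  have hQdiff : ∀ w : V,
      (if w ∈ e then x w ^ (k-1) + ∏ j ∈ e.erase w, x j else 0)
        + (if w ∈ f then x w ^ (k-1) + ∏ j ∈ f.erase w, x j else 0)
      = (if w ∈ e' then x w ^ (k-1) + ∏ j ∈ e'.erase w, x j else 0)
        + (if w ∈ f' then x w ^ (k-1) + ∏ j ∈ f'.erase w, x j else 0) := by
    intro w
    have hsp : Qcomp k E' x w
          + (if w ∈ e then x w ^ (k-1) + ∏ j ∈ e.erase w, x j else 0)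
          + (if w ∈ f then x w ^ (k-1) + ∏ j ∈ f.erase w, x j else 0)
        = Qcomp k E x w
          + (if w ∈ e' then x w ^ (k-1) + ∏ j ∈ e'.erase w, x j else 0)
          + (if w ∈ f' then x w ^ (k-1) + ∏ j ∈ f'.erase w, x j else 0) := by
      rw [Qcomp_ite, Qcomp_ite]
      exact sum_split he hf hefne he'E hf'E he'f' hE'
        (fun g => if w ∈ g then x w ^ (k-1) + ∏ j ∈ g.erase w, x j else 0)
    rw [heig w, heig' w] at hsp
    linarith
  rcases hstrict with h1s | h2s
  · -- pick w ∈ e \ U1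
    have hne' : (e \ U1).Nonempty := by
      rw [← Finset.card_pos, hcE1]; omega
    obtain ⟨w, hw⟩ := hne'
    have hw_e : w ∈ e := (Finset.mem_sdiff.mp hw).1
    have hw_nU1 : w ∉ U1 := (Finset.mem_sdiff.mp hw).2
    have hw_nf : w ∉ f := Finset.disjoint_left.mp hef hw_e
    have hw_e' : w ∈ e' := by rw [he']; exact Finset.mem_union_left _ hw
    have hw_nf' : w ∉ f' := by
      rw [hf', Finset.mem_union]
      rintro (hh | hh)
      · exact hw_nf (Finset.mem_sdiff.mp hh).1
      · exact hw_nU1 hh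
    have hsp := hQdiff w
    rw [if_pos hw_e, if_neg hw_nf, if_pos hw_e', if_neg hw_nf'] at hsp
    have hpe : e.erase w = ((e \ U1).erase w) ∪ U1 := by
      conv_lhs => rw [← Finset.sdiff_union_of_subset hU1]
      rw [Finset.erase_union_distrib, Finset.erase_eq_of_notMem hw_nU1]
    have hpe' : e'.erase w = ((e \ U1).erase w) ∪ V1 := by
      rw [he', Finset.erase_union_distrib,
        Finset.erase_eq_of_notMem (fun h => hw_nf (hV1 h))]
    have hd1 : Disjoint ((e \ U1).erase w) U1 := hdis1.mono_left (Finset.erase_subset _ _)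
    have hd2 : Disjoint ((e \ U1).erase w) V1 := hdis3.mono_left (Finset.erase_subset _ _)
    have heq2 : (∏ j ∈ (e \ U1).erase w, x j) * (∏ v ∈ U1, x v)
        = (∏ j ∈ (e \ U1).erase w, x j) * (∏ v ∈ V1, x v) := by
      rw [← Finset.prod_union hd1, ← Finset.prod_union hd2, ← hpe, ← hpe']
      linarith
    have hppos : 0 < ∏ j ∈ (e \ U1).erase w, x j :=
      Finset.prod_pos fun j _ => hpos j
    exact absurd (mul_left_cancel₀ (ne_of_gt hppos) heq2) (ne_of_gt h1s)
  · -- pick u ∈ U1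
    have hne' : U1.Nonempty := by rw [← Finset.card_pos, hU1c]; omega
    obtain ⟨u, hu1⟩ := hne'
    have hu_e : u ∈ e := hU1 hu1
    have hu_nf : u ∉ f := Finset.disjoint_left.mp hef hu_e
    have hu_nV1 : u ∉ V1 := fun h => hu_nf (hV1 h)
    have hu_ne' : u ∉ e' := by
      rw [he', Finset.mem_union]
      rintro (hh | hh)
      · exact (Finset.mem_sdiff.mp hh).2 hu1
      · exact hu_nV1 hh
    have hu_f' : u ∈ f' := by rw [hf']; exact Finset.mem_union_right _ hu1
    have hsp := hQdiff u
    rw [if_pos hu_e, if_neg hu_nf, if_neg hu_ne', if_pos hu_f'] at hsp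
    have hpe : e.erase u = (e \ U1) ∪ (U1.erase u) := by
      conv_lhs => rw [← Finset.sdiff_union_of_subset hU1]
      rw [Finset.erase_union_distrib,
        Finset.erase_eq_of_notMem (fun h => (Finset.mem_sdiff.mp h).2 hu1)]
    have hpf' : f'.erase u = (f \ V1) ∪ (U1.erase u) := by
      rw [hf', Finset.erase_union_distrib,
        Finset.erase_eq_of_notMem (fun h => hu_nf (Finset.mem_sdiff.mp h).1)]
    have hd1 : Disjoint (e \ U1) (U1.erase u) := hdis1.mono_right (Finset.erase_subset _ _)
    have hd2 : Disjoint (f \ V1) (U1.erase u) := hdis4.mono_right (Finset.erase_subset _ _)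
    have heq2 : (∏ v ∈ e \ U1, x v) * (∏ j ∈ U1.erase u, x j)
        = (∏ v ∈ f \ V1, x v) * (∏ j ∈ U1.erase u, x j) := by
      rw [← Finset.prod_union hd1, ← Finset.prod_union hd2, ← hpe, ← hpf']
      linarith
    have hppos : 0 < ∏ j ∈ U1.erase u, x j :=
      Finset.prod_pos fun j _ => hpos j
    exact absurd (mul_right_cancel₀ (ne_of_gt hppos) heq2) (ne_of_lt h2s)


end SLT
end

section
/- Let G' be obtained from a k-uniform supertree G by edge-releasing a non-pendent edge e at a vertex v of e (moving all edges adjacent to e but not containing v, from their intersection vertices with e, to v). Then the diameter of G' is at most the diameter of G. -/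
open scoped Classical BigOperators

namespace SLT

variable {V : Type*}

/-- Distance between two vertices: length of a shortest path. -/
noncomputable def hdist (E : Finset (Finset V)) (u v : V) : ℕ :=
  sInf {l | ∃ vs es, IsPath E vs es ∧ es.length = l ∧
    vs.head? = some u ∧ vs.getLast? = some v}

/-- Diameter: maximum distance over all pairs of vertices. -/
noncomputable def hdiam [Fintype V] (E : Finset (Finset V)) : ℕ :=
  sSup {d | ∃ u v : V, hdist E u v = d}

/-- An edge is pendent if it contains at least `k-1` vertices of degree 1. -/
def IsPendentEdge (k : ℕ) (E : Finset (Finset V)) (e : Finset V) : Prop :=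
  k - 1 ≤ (e.filter (fun w => degree E w = 1)).card

section Aux

variable {V : Type*}

/-! ### Generic list helpers -/

lemma head?_eq_cons {l : List V} {a : V} (h : l.head? = some a) : ∃ t, l = a :: t := by
  cases l with
  | nil => simp at h
  | cons x t => simp at h; exact ⟨t, by rw [h]⟩

lemma mem_of_head? {l : List V} {a : V} (h : l.head? = some a) : a ∈ l := by
  obtain ⟨t, rfl⟩ := head?_eq_cons h; simp

lemma mem_of_getLast? {l : List V} {a : V} (h : l.getLast? = some a) : a ∈ l := by
  have := List.head?_reverse (l := l)
  rw [h] at this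
  have := mem_of_head? this
  simpa using this

lemma ne_nil_of_getLast? {l : List V} {a : V} (h : l.getLast? = some a) : l ≠ [] := by
  intro hl; rw [hl] at h; simp at h

lemma getLast?_cons' {l : List V} (a : V) (h : l ≠ []) :
    (a :: l).getLast? = l.getLast? := by
  cases l with
  | nil => exact absurd rfl h
  | cons b t => exact List.getLast?_cons_cons

lemma getLast?_append' {l₁ l₂ : List V} (h : l₂ ≠ []) :
    (l₁ ++ l₂).getLast? = l₂.getLast? := by
  induction l₁ with
  | nil => rfl
  | cons a t ih =>
      have h2 : t ++ l₂ ≠ [] := by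
        intro hc; rcases List.append_eq_nil_iff.mp hc with ⟨_, h2⟩; exact h h2
      rw [List.cons_append, getLast?_cons' a h2, ih]

lemma getLast?_drop' {l : List V} {i : ℕ} (h : i < l.length) :
    (l.drop i).getLast? = l.getLast? := by
  have hne : l.drop i ≠ [] := by
    intro hc
    have := List.length_drop (i := i) (l := l)
    rw [hc] at this; simp at this; omega
  conv_rhs => rw [← List.take_append_drop i l]
  rw [getLast?_append' hne]

lemma head?_append' {l₁ l₂ : List V} {a : V} (h : l₁.head? = some a) :
    (l₁ ++ l₂).head? = some a := by
  obtain ⟨t, rfl⟩ := head?_eq_cons h; rfl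

lemma take_succ' {l : List V} {i : ℕ} (h : i < l.length) :
    l.take (i + 1) = l.take i ++ [l[i]] := by
  rw [List.take_succ, List.getElem?_eq_getElem h]; rfl

lemma getLast?_take' {l : List V} {i : ℕ} (h : i < l.length) :
    (l.take (i + 1)).getLast? = some l[i] := by
  rw [take_succ' h, List.getLast?_concat]

lemma head?_take' {l : List V} {n : ℕ} (hn : 1 ≤ n) : (l.take n).head? = l.head? := by
  cases l with
  | nil => simp
  | cons a t =>
      cases n with
      | zero => omega
      | succ m => simp [List.take_succ_cons]

lemma getLast?_map' (σ : V → V) {l : List V} {b : V} (h : l.getLast? = some b) :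
    (l.map σ).getLast? = some (σ b) := by
  rw [← List.head?_reverse, ← List.map_reverse, List.head?_map, List.head?_reverse, h]; rfl

lemma head?_getElem {l : List V} {a : V} (h : l.head? = some a) (h0 : 0 < l.length) :
    l[0] = a := by
  obtain ⟨t, rfl⟩ := head?_eq_cons h; rfl

lemma getLast?_getElem {l : List V} {b : V} (h : l.getLast? = some b) {i : ℕ}
    (hi : i + 1 = l.length) : l[i]'(by omega) = b := by
  have hne : l ≠ [] := ne_nil_of_getLast? h
  have h2 : l.getLast hne = b := by
    rw [List.getLast?_eq_getLast (l := l) hne] at h; injection h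
  rw [List.getLast_eq_getElem] at h2
  have hieq : i = l.length - 1 := by omega
  subst hieq
  exact h2

lemma mem_take_getElem {l : List V} {n : ℕ} {x : V} (h : x ∈ l.take n) :
    ∃ i, i < n ∧ ∃ hi : i < l.length, l[i] = x := by
  obtain ⟨i, hi, hx⟩ := List.mem_iff_getElem.mp h
  have hlen := List.length_take (i := n) (l := l)
  have hi' : i < n ∧ i < l.length := by rw [hlen] at hi; omega
  exact ⟨i, hi'.1, hi'.2, by rw [← hx, List.getElem_take]⟩

lemma dropLast_concat_of_getLast? {l : List V} {b : V} (h : l.getLast? = some b) :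
    l.dropLast ++ [b] = l := by
  have hne : l ≠ [] := ne_nil_of_getLast? h
  rw [List.getLast?_eq_getLast (l := l) hne] at h
  have h2 := List.dropLast_append_getLast hne
  have : l.getLast hne = b := by injection h
  rw [← this]; exact h2

end Aux
section ChainsLemmas

variable {V : Type*}

lemma chains_single_cons {x : V} {e : Finset V} {es : List (Finset V)} :
    ¬ Chains [x] (e :: es) := fun h => h

lemma chains_cons_nil {a b : V} {t : List V} : ¬ Chains (a :: b :: t) ([] : List (Finset V)) :=
  fun h => h

lemma chains_nil_left {es : List (Finset V)} (h : Chains ([] : List V) es) : False := by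
  cases es <;> exact h

lemma chains_ne_nil {vs : List V} {es : List (Finset V)} (h : Chains vs es) : vs ≠ [] := by
  intro hc; rw [hc] at h; exact chains_nil_left h

lemma chains_length {es : List (Finset V)} : ∀ {vs : List V}, Chains vs es →
    vs.length = es.length + 1 := by
  induction es with
  | nil =>
      intro vs h
      match vs, h with
      | [x], _ => rfl
      | [], h => exact (chains_nil_left h).elim
      | a :: b :: t, h => exact absurd h chains_cons_nil
  | cons e es ih =>
      intro vs h
      match vs, h with
      | [], h => exact (chains_nil_left h).elim
      | [x], h => exact absurd h chains_single_cons
      | a :: b :: t, h =>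
          have := ih h.2.2
          simpa using this

lemma chains_getElem {es : List (Finset V)} : ∀ {vs : List V}, Chains vs es →
    ∀ i (hi : i < es.length) (hv : i + 1 < vs.length),
      vs[i]'(by omega) ∈ es[i] ∧ vs[i+1] ∈ es[i] := by
  induction es with
  | nil => intro vs _ i hi _; simp at hi
  | cons e es ih =>
      intro vs h i hi hv
      match vs, h with
      | [], h => exact (chains_nil_left h).elim
      | [x], h => exact absurd h chains_single_cons
      | a :: b :: t, h =>
          cases i with
          | zero => exact ⟨h.1, h.2.1⟩
          | succ n =>
              have := ih h.2.2 n (by simpa using hi) (by simp at hv ⊢; omega)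
              simpa using this

lemma chains_drop : ∀ (i : ℕ) {vs : List V} {es : List (Finset V)}, Chains vs es →
    i ≤ es.length → Chains (vs.drop i) (es.drop i) := by
  intro i
  induction i with
  | zero => intro vs es h _; simpa using h
  | succ n ih =>
      intro vs es h hi
      match vs, es, h with
      | [], es, h => exact (chains_nil_left h).elim
      | [x], [], h => simp at hi
      | [x], e :: es, h => exact absurd h chains_single_cons
      | a :: b :: t, [], h => exact absurd h chains_cons_nil
      | a :: b :: t, e :: es, h =>
          have hle : n ≤ es.length := by simpa using hi
          simpa using ih h.2.2 hle

lemma chains_take : ∀ (i : ℕ) {vs : List V} {es : List (Finset V)}, Chains vs es →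
    Chains (vs.take (i+1)) (es.take i) := by
  intro i
  induction i with
  | zero =>
      intro vs es h
      match vs, es, h with
      | [], es, h => exact (chains_nil_left h).elim
      | [x], [], h => exact trivial
      | [x], e :: es, h => exact absurd h chains_single_cons
      | a :: b :: t, [], h => exact absurd h chains_cons_nil
      | a :: b :: t, e :: es, h => exact trivial
  | succ n ih =>
      intro vs es h
      match vs, es, h with
      | [], es, h => exact (chains_nil_left h).elim
      | [x], [], h => exact trivial
      | [x], e :: es, h => exact absurd h chains_single_cons
      | a :: b :: t, [], h => exact absurd h chains_cons_nil
      | a :: b :: t, e :: es, h => exact ⟨h.1, h.2.1, ih h.2.2⟩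

lemma chains_append : ∀ {vs₁ : List V} {es₁ : List (Finset V)} {c : V}
    {vs₂ : List V} {es₂ : List (Finset V)},
    Chains (vs₁ ++ [c]) es₁ → Chains (c :: vs₂) es₂ →
    Chains (vs₁ ++ c :: vs₂) (es₁ ++ es₂) := by
  intro vs₁
  induction vs₁ with
  | nil =>
      intro es₁ c vs₂ es₂ h₁ h₂
      match es₁, h₁ with
      | [], _ => simpa using h₂
      | e :: es, h₁ => exact absurd h₁ chains_single_cons
  | cons a t ih =>
      intro es₁ c vs₂ es₂ h₁ h₂
      match t, es₁, h₁ with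
      | [], [], h₁ => exact absurd h₁ chains_cons_nil
      | [], e :: es₁', h₁ =>
          have h3 : a ∈ e ∧ c ∈ e ∧ Chains [c] es₁' := h₁
          match es₁', h3 with
          | [], h3 => exact ⟨h3.1, h3.2.1, by simpa using h₂⟩
          | f :: es, h3 => exact absurd h3.2.2 chains_single_cons
      | b :: t', [], h₁ => exact absurd h₁ chains_cons_nil
      | b :: t', e :: es₁', h₁ =>
          have h3 : a ∈ e ∧ b ∈ e ∧ Chains ((b :: t') ++ [c]) es₁' := h₁
          exact ⟨h3.1, h3.2.1, ih h3.2.2 h₂⟩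

lemma chains_reverse {es : List (Finset V)} : ∀ {vs : List V}, Chains vs es →
    Chains vs.reverse es.reverse := by
  induction es with
  | nil =>
      intro vs h
      match vs, h with
      | [x], _ => exact trivial
      | [], h => exact (chains_nil_left h).elim
      | a :: b :: t, h => exact absurd h chains_cons_nil
  | cons e es ih =>
      intro vs h
      match vs, h with
      | [], h => exact (chains_nil_left h).elim
      | [x], h => exact absurd h chains_single_cons
      | a :: b :: t, h =>
          have h1 := ih h.2.2
          have h3 : (b :: t).reverse = t.reverse ++ [b] := by simp
          rw [h3] at h1
          have h4 := chains_append h1 (show Chains (b :: [a]) [e] from ⟨h.2.1, h.1, trivial⟩)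
          have h5 : (a :: b :: t).reverse = t.reverse ++ b :: [a] := by simp
          have h6 : (e :: es).reverse = es.reverse ++ [e] := by simp
          rw [h5, h6]
          exact h4

lemma chains_map (σ : V → V) (τ : Finset V → Finset V) :
    ∀ {vs : List V} {es : List (Finset V)}, Chains vs es →
    (∀ x ∈ vs, ∀ f ∈ es, x ∈ f → σ x ∈ τ f) →
    Chains (vs.map σ) (es.map τ) := by
  intro vs
  induction vs with
  | nil => intro es h _; exact (chains_nil_left h).elim
  | cons a t ih =>
      intro es h hadj
      match t, es, h with
      | [], [], h => exact trivial
      | [], e :: es', h => exact absurd h chains_single_cons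
      | b :: t', [], h => exact absurd h chains_cons_nil
      | b :: t', e :: es', h =>
          refine ⟨hadj a (by simp) e (by simp) h.1, hadj b (by simp) e (by simp) h.2.1, ?_⟩
          exact ih h.2.2 (fun x hx f hf hxf => hadj x (by simp [hx]) f (by simp [hf]) hxf)

lemma chains_singleton_of_nil {vs : List V} (h : Chains vs ([] : List (Finset V))) :
    ∃ x, vs = [x] := by
  match vs, h with
  | [x], _ => exact ⟨x, rfl⟩
  | [], h => exact (chains_nil_left h).elim
  | a :: b :: t, h => exact absurd h chains_cons_nil

end ChainsLemmas
section PathLemmas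

variable {V : Type*} {E : Finset (Finset V)}

lemma path_singleton (E : Finset (Finset V)) (x : V) : IsPath E [x] [] :=
  ⟨by simp, by simp, by simp, trivial⟩

lemma hdist_le_of_path {vs es} (h : IsPath E vs es) {u w : V} (hh : vs.head? = some u)
    (hl : vs.getLast? = some w) : hdist E u w ≤ es.length :=
  Nat.sInf_le ⟨vs, es, h, rfl, hh, hl⟩

lemma hdist_self (E : Finset (Finset V)) (u : V) : hdist E u u = 0 :=
  Nat.le_zero.mp (hdist_le_of_path (path_singleton E u) rfl rfl)

lemma exists_path_hdist (hc : HConnected E) (u w : V) :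
    ∃ vs es, IsPath E vs es ∧ es.length = hdist E u w ∧
      vs.head? = some u ∧ vs.getLast? = some w := by
  have hne : {l | ∃ vs es, IsPath E vs es ∧ es.length = l ∧
      vs.head? = some u ∧ vs.getLast? = some w}.Nonempty := by
    obtain ⟨vs, es, hp, hh, hl⟩ := hc u w
    exact ⟨es.length, vs, es, hp, rfl, hh, hl⟩
  obtain ⟨vs, es, hp, hlen, hh, hl⟩ := Nat.sInf_mem hne
  exact ⟨vs, es, hp, hlen, hh, hl⟩

lemma one_le_hdist (hc : HConnected E) {u w : V} (h : u ≠ w) : 1 ≤ hdist E u w := by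
  obtain ⟨vs, es, hp, hlen, hh, hl⟩ := exists_path_hdist hc u w
  rcases Nat.eq_zero_or_pos (hdist E u w) with h0 | h1
  · rw [h0] at hlen
    have hes : es = [] := List.length_eq_zero_iff.mp hlen
    subst hes
    obtain ⟨x, rfl⟩ := chains_singleton_of_nil hp.2.2.2
    simp only [List.head?_cons, Option.some.injEq] at hh
    simp only [List.getLast?_singleton, Option.some.injEq] at hl
    exact absurd (hh.symm.trans hl) h
  · exact h1

lemma path_drop {vs es} (h : IsPath E vs es) (i : ℕ) (hi : i ≤ es.length) :
    IsPath E (vs.drop i) (es.drop i) :=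
  ⟨(List.drop_sublist i vs).nodup h.1, (List.drop_sublist i es).nodup h.2.1,
   fun f hf => h.2.2.1 f ((List.drop_sublist i es).subset hf),
   chains_drop i h.2.2.2 hi⟩

lemma path_cons {vs es} (h : IsPath E vs es) {x a : V} {f : Finset V}
    (hh : vs.head? = some x) (hf : f ∈ E) (ha : a ∈ f) (hx : x ∈ f)
    (hav : a ∉ vs) (hfe : f ∉ es) : IsPath E (a :: vs) (f :: es) := by
  obtain ⟨t, rfl⟩ := head?_eq_cons hh
  refine ⟨List.nodup_cons.mpr ⟨hav, h.1⟩, List.nodup_cons.mpr ⟨hfe, h.2.1⟩, ?_, ?_⟩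
  · intro g hg
    rcases List.mem_cons.mp hg with rfl | hg
    · exact hf
    · exact h.2.2.1 g hg
  · exact ⟨ha, hx, h.2.2.2⟩

lemma path_jump {vs es} (h : IsPath E vs es) {j : ℕ} (hj : j < es.length) {a : V}
    (hav : a ∉ vs) (haf : a ∈ es[j]) :
    IsPath E (a :: vs.drop (j+1)) (es.drop j) ∧
      (a :: vs.drop (j+1)).getLast? = vs.getLast? := by
  have hlen := chains_length h.2.2.2
  have hj1 : j + 1 < vs.length := by omega
  have hdropne : vs.drop (j+1) ≠ [] := by
    intro hc
    have hld := List.length_drop (i := j+1) (l := vs)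
    rw [hc] at hld; simp at hld; omega
  have hch : Chains (a :: vs.drop (j+1)) (es.drop j) := by
    rw [List.drop_eq_getElem_cons hj, List.drop_eq_getElem_cons hj1]
    refine ⟨haf, (chains_getElem h.2.2.2 j hj hj1).2, ?_⟩
    rw [← List.drop_eq_getElem_cons hj1]
    exact chains_drop (j+1) h.2.2.2 (by omega)
  refine ⟨⟨?_, (List.drop_sublist j es).nodup h.2.1,
      fun f hf => h.2.2.1 f ((List.drop_sublist j es).subset hf), hch⟩, ?_⟩
  · exact List.nodup_cons.mpr ⟨fun hc => hav ((List.drop_sublist (j+1) vs).subset hc),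
      (List.drop_sublist (j+1) vs).nodup h.1⟩
  · rw [getLast?_cons' a hdropne, getLast?_drop' hj1]

lemma path_extend {vs es} (h : IsPath E vs es) {x a : V} {f : Finset V}
    (hh : vs.head? = some x) (hf : f ∈ E) (ha : a ∈ f) (hx : x ∈ f) :
    ∃ vs' es', IsPath E vs' es' ∧ es'.length ≤ es.length + 1 ∧
      vs'.head? = some a ∧ vs'.getLast? = vs.getLast? := by
  have hlen := chains_length h.2.2.2
  by_cases hav : a ∈ vs
  · obtain ⟨i, hi, hia⟩ := List.mem_iff_getElem.mp hav
    refine ⟨vs.drop i, es.drop i, path_drop h i (by omega), ?_, ?_, getLast?_drop' hi⟩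
    · rw [List.length_drop]; omega
    · rw [List.head?_drop, List.getElem?_eq_getElem hi, hia]
  · by_cases hfe : f ∈ es
    · obtain ⟨j, hj, hjf⟩ := List.mem_iff_getElem.mp hfe
      have hp := path_jump h hj hav (by rw [hjf]; exact ha)
      refine ⟨_, _, hp.1, ?_, rfl, hp.2⟩
      rw [List.length_drop]; omega
    · exact ⟨a :: vs, f :: es, path_cons h hh hf ha hx hav hfe, by simp, rfl,
        getLast?_cons' a (chains_ne_nil h.2.2.2)⟩

lemma walk_imp_path : ∀ {es : List (Finset V)} {vs : List V}, Chains vs es →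
    (∀ f ∈ es, f ∈ E) →
    ∃ vs' es', IsPath E vs' es' ∧ es'.length ≤ es.length ∧
      vs'.head? = vs.head? ∧ vs'.getLast? = vs.getLast? := by
  intro es
  induction es with
  | nil =>
      intro vs h _
      obtain ⟨x, rfl⟩ := chains_singleton_of_nil h
      exact ⟨[x], [], path_singleton E x, le_rfl, rfl, rfl⟩
  | cons f es ih =>
      intro vs h hE
      match vs, h with
      | [], h => exact (chains_nil_left h).elim
      | [x], h => exact absurd h chains_single_cons
      | a :: b :: t, h =>
          obtain ⟨vs', es', hp, hlen, hh, hl⟩ := ih h.2.2 (fun g hg => hE g (by simp [hg]))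
          have hh' : vs'.head? = some b := by rw [hh]; rfl
          obtain ⟨vs'', es'', hp2, hlen2, hh2, hl2⟩ :=
            path_extend hp hh' (hE f (by simp)) h.1 h.2.1
          refine ⟨vs'', es'', hp2, by simp; omega, hh2, ?_⟩
          rw [hl2, hl, List.getLast?_cons_cons]

lemma hdist_le_of_walk {vs es} (hch : Chains vs es) (hE : ∀ f ∈ es, f ∈ E) {u w : V}
    (hh : vs.head? = some u) (hl : vs.getLast? = some w) : hdist E u w ≤ es.length := by
  obtain ⟨vs', es', hp, hlen, hh', hl'⟩ := walk_imp_path hch hE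
  exact le_trans (hdist_le_of_path hp (by rw [hh', hh]) (by rw [hl', hl])) hlen

lemma path_reverse {vs es} (h : IsPath E vs es) : IsPath E vs.reverse es.reverse :=
  ⟨by simpa using h.1, by simpa using h.2.1,
   fun f hf => h.2.2.1 f (by simpa using hf), chains_reverse h.2.2.2⟩

lemma hdist_symm (E : Finset (Finset V)) (u w : V) : hdist E u w = hdist E w u := by
  unfold hdist
  congr 1
  ext l
  constructor <;> rintro ⟨vs, es, hp, hlen, hh, hl⟩ <;>
    exact ⟨vs.reverse, es.reverse, path_reverse hp, by simpa using hlen,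
      by rw [List.head?_reverse]; exact hl, by rw [List.getLast?_reverse]; exact hh⟩

lemma hdist_le_card (hc : HConnected E) (u w : V) : hdist E u w ≤ E.card := by
  obtain ⟨vs, es, hp, hlen, -, -⟩ := exists_path_hdist hc u w
  rw [← hlen]
  have h1 : es.toFinset ⊆ E := fun f hf => hp.2.2.1 f (List.mem_toFinset.mp hf)
  have h2 : es.toFinset.card = es.length := List.toFinset_card_of_nodup hp.2.1
  calc es.length = es.toFinset.card := h2.symm
    _ ≤ E.card := Finset.card_le_card h1

lemma hdist_le_hdiam [Fintype V] (hc : HConnected E) (u w : V) :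
    hdist E u w ≤ hdiam E := by
  apply le_csSup
  · refine ⟨E.card, ?_⟩
    rintro d ⟨a, b, rfl⟩
    exact hdist_le_card hc a b
  · exact ⟨u, w, rfl⟩

end PathLemmas
section TreeLemmas

variable {V : Type*} {E : Finset (Finset V)}

/-- Two vertex-disjoint (except endpoints) edge-disjoint chains with the same endpoints
yield a cycle, contradicting acyclicity. -/
lemma no_two_chains (htree : ∀ vs es, ¬ IsCycle E vs es)
    {l₁ l₂ : List V} {E₁ E₂ : List (Finset V)} {a c : V}
    (hch₁ : Chains l₁ E₁) (hch₂ : Chains l₂ E₂)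
    (hh₁ : l₁.head? = some a) (hh₂ : l₂.head? = some a)
    (hl₁ : l₁.getLast? = some c) (hl₂ : l₂.getLast? = some c)
    (hnd₁ : l₁.Nodup) (hnd₂ : l₂.Nodup)
    (hend₁ : E₁.Nodup) (hend₂ : E₂.Nodup)
    (hvdisj : ∀ x ∈ l₁, x ∈ l₂ → x = a ∨ x = c)
    (hedisj : ∀ f ∈ E₁, f ∉ E₂)
    (hE₁ : ∀ f ∈ E₁, f ∈ E) (hE₂ : ∀ f ∈ E₂, f ∈ E)
    (hlen₁ : 1 ≤ E₁.length) (hlen₂ : 1 ≤ E₂.length) : False := by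
  have hch₂r : Chains l₂.reverse E₂.reverse := chains_reverse hch₂
  have hh2r : l₂.reverse.head? = some c := by rw [List.head?_reverse]; exact hl₂
  obtain ⟨t, ht⟩ := head?_eq_cons hh2r
  have hlen2r : l₂.reverse.length = E₂.length + 1 := by
    rw [List.length_reverse]; exact chains_length hch₂
  have htne : t ≠ [] := by
    intro hc
    subst hc
    have h9 : l₂.reverse.length = 1 := by rw [ht]; rfl
    omega
  have htlast : t.getLast? = some a := by
    have : l₂.reverse.getLast? = some a := by rw [List.getLast?_reverse]; exact hh₂
    rw [ht, getLast?_cons' c htne] at this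
    exact this
  -- l₁ = l₁.dropLast ++ [c]
  have hl₁split : l₁.dropLast ++ [c] = l₁ := dropLast_concat_of_getLast? hl₁
  have hch₂r' : Chains (c :: t) E₂.reverse := by rw [← ht]; exact hch₂r
  have hbig : Chains (l₁.dropLast ++ c :: t) (E₁ ++ E₂.reverse) := by
    apply chains_append _ hch₂r'
    rw [hl₁split]; exact hch₁
  have htsplit : t.dropLast ++ [a] = t := dropLast_concat_of_getLast? htlast
  have hshape : l₁.dropLast ++ c :: t = (l₁ ++ t.dropLast) ++ [a] := by
    conv_lhs => rw [← htsplit]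
    rw [← hl₁split]
    simp
  rw [hshape] at hbig
  -- nodup of l₂.reverse
  have hnd2r : (c :: t).Nodup := by rw [← ht]; simpa using hnd₂
  have hcnt : c ∉ t := (List.nodup_cons.mp hnd2r).1
  have hndt : t.Nodup := (List.nodup_cons.mp hnd2r).2
  have hant : a ∉ t.dropLast := by
    intro hc
    have : t.Nodup := hndt
    rw [← htsplit] at this
    rcases List.nodup_append'.mp this with ⟨-, -, hdisj⟩
    exact hdisj hc (by simp)
  apply htree (l₁ ++ t.dropLast) (E₁ ++ E₂.reverse)
  refine ⟨?_, ?_, ?_, ?_, a, ?_, ?_⟩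
  · have h9 : (E₁ ++ E₂.reverse).length = E₁.length + E₂.length := by simp
    omega
  · rw [List.nodup_append']
    refine ⟨hnd₁, (List.dropLast_sublist t).nodup hndt, ?_⟩
    intro x hx1 hx2
    have hxl₂ : x ∈ l₂ := by
      have : x ∈ c :: t := by simp [(List.dropLast_sublist t).subset hx2]
      rw [← ht] at this
      exact List.mem_reverse.mp this
    rcases hvdisj x hx1 hxl₂ with rfl | rfl
    · exact hant hx2
    · exact hcnt ((List.dropLast_sublist t).subset hx2)
  · rw [List.nodup_append']
    refine ⟨hend₁, by simpa using hend₂, ?_⟩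
    intro f hf1 hf2
    exact hedisj f hf1 (List.mem_reverse.mp hf2)
  · intro f hf
    rcases List.mem_append.mp hf with hf | hf
    · exact hE₁ f hf
    · exact hE₂ f (List.mem_reverse.mp hf)
  · apply head?_append'
    exact hh₁
  · exact hbig

/-- In an acyclic hypergraph, two paths with the same endpoints start with
the same first edge. -/
lemma same_first_edge (htree : ∀ vs es, ¬ IsCycle E vs es)
    {vs₁ vs₂ : List V} {es₁ es₂ : List (Finset V)} {a b : V}
    (h₁ : IsPath E vs₁ es₁) (h₂ : IsPath E vs₂ es₂)
    (hh₁ : vs₁.head? = some a) (hh₂ : vs₂.head? = some a)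
    (hl₁ : vs₁.getLast? = some b) (hl₂ : vs₂.getLast? = some b)
    (hne₁ : es₁ ≠ []) (hne₂ : es₂ ≠ []) :
    es₁.head? = es₂.head? := by
  by_contra hcon
  have hch₁ := h₁.2.2.2
  have hch₂ := h₂.2.2.2
  have hlen₁ : vs₁.length = es₁.length + 1 := chains_length hch₁
  have hlen₂ : vs₂.length = es₂.length + 1 := chains_length hch₂
  have hn₁ : 1 ≤ es₁.length := by
    cases es₁ with
    | nil => exact absurd rfl hne₁
    | cons x t => simp
  have hn₂ : 1 ≤ es₂.length := by
    cases es₂ with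
    | nil => exact absurd rfl hne₂
    | cons x t => simp
  -- the searched predicate
  have hex : ∃ i, i < es₁.length ∧ (vs₁.getD (i+1) a ∈ vs₂ ∨ es₁.getD i ∅ ∈ es₂) := by
    refine ⟨es₁.length - 1, by omega, Or.inl ?_⟩
    have hb : vs₁.getD (es₁.length - 1 + 1) a = b := by
      rw [List.getD_eq_getElem vs₁ a (by omega)]
      exact getLast?_getElem hl₁ (by omega)
    rw [hb]
    exact mem_of_getLast? hl₂
  classical
  obtain ⟨i₀, hi₀spec⟩ := Nat.findX hex
  obtain ⟨hi₀, hcoll⟩ := hi₀spec.1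
  have hmin := hi₀spec.2
  have hgd1 : vs₁.getD (i₀+1) a = vs₁[i₀+1]'(by omega) := List.getD_eq_getElem vs₁ a (by omega)
  have hgd2 : es₁.getD i₀ ∅ = es₁[i₀] := List.getD_eq_getElem es₁ ∅ hi₀
  have hcoll' : vs₁[i₀+1]'(by omega) ∈ vs₂ ∨ es₁[i₀] ∈ es₂ := by
    rcases hcoll with h | h
    · exact Or.inl (hgd1 ▸ h)
    · exact Or.inr (hgd2 ▸ h)
  clear hcoll
  have hcoll := hcoll'
  -- minimality in usable form
  have hminv : ∀ i (h1 : 1 ≤ i) (h2 : i ≤ i₀), vs₁[i]'(by omega) ∉ vs₂ := by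
    intro i h1 h2 hmem
    refine hmin (i-1) (by omega) ⟨by omega, Or.inl ?_⟩
    have h3 : i - 1 + 1 = i := by omega
    rw [h3, List.getD_eq_getElem vs₁ a (by omega)]
    exact hmem
  have hmine : ∀ i (h2 : i < i₀), es₁[i]'(by omega) ∉ es₂ := by
    intro i h2 hmem
    refine hmin i h2 ⟨by omega, Or.inr ?_⟩
    rw [List.getD_eq_getElem es₁ ∅ (by omega)]
    exact hmem
  have hv₁0 : vs₁[0]'(by omega) = a := head?_getElem hh₁ (by omega)
  have hv₂0 : vs₂[0]'(by omega) = a := head?_getElem hh₂ (by omega)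
  by_cases hF : es₁[i₀] ∈ es₂
  · -- edge collision
    obtain ⟨j, hj, hjF⟩ := List.mem_iff_getElem.mp hF
    rcases Nat.eq_zero_or_pos j with rfl | hj1
    · -- shared edge is the first edge of path 2 : direct cycle on path 1
      have hi₀1 : 1 ≤ i₀ := by
        rcases Nat.eq_zero_or_pos i₀ with rfl | h; swap; exact h
        exfalso
        apply hcon
        have e1 : es₁.head? = some (es₁[0]'(by omega)) := by
          cases es₁ with
          | nil => simp at hn₁
          | cons x t => rfl
        have e2 : es₂.head? = some (es₂[0]'(by omega)) := by
          cases es₂ with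
          | nil => simp at hn₂
          | cons x t => rfl
        rw [e1, e2, hjF]
      apply htree (vs₁.take (i₀+1)) (es₁.take (i₀+1))
      refine ⟨?_, (List.take_sublist _ _).nodup h₁.1, (List.take_sublist _ _).nodup h₁.2.1,
        fun f hf => h₁.2.2.1 f ((List.take_sublist _ _).subset hf), a, ?_, ?_⟩
      · rw [List.length_take]; omega
      · rw [head?_take' (by omega)]; exact hh₁
      · have hstep : Chains ((vs₁[i₀]'(by omega)) :: [a]) [es₁[i₀]] := by
          refine ⟨(chains_getElem hch₁ i₀ hi₀ (by omega)).1, ?_, trivial⟩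
          rw [← hjF, ← hv₂0]
          exact (chains_getElem hch₂ 0 (by omega) (by omega)).1
        have hpre : Chains (vs₁.take i₀ ++ [vs₁[i₀]'(by omega)]) (es₁.take i₀) := by
          rw [← take_succ' (by omega)]
          exact chains_take i₀ hch₁
        have hfin := chains_append hpre hstep
        have hveq : vs₁.take (i₀+1) ++ [a] = vs₁.take i₀ ++ (vs₁[i₀]'(by omega)) :: [a] := by
          rw [take_succ' (show i₀ < vs₁.length by omega), List.append_assoc]
          rfl
        have heeq : es₁.take (i₀+1) = es₁.take i₀ ++ [es₁[i₀]] := take_succ' hi₀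
        rw [hveq, heeq]
        exact hfin
    · -- j ≥ 1 : two disjoint chains from a to c := vs₂[j]
      have hjv : j < vs₂.length := by omega
      apply no_two_chains htree (l₁ := vs₁.take (i₀+1) ++ [vs₂[j]'hjv])
        (E₁ := es₁.take (i₀+1)) (l₂ := vs₂.take (j+1)) (E₂ := es₂.take j)
        (a := a) (c := vs₂[j]'hjv)
      · -- chains 1
        have hstep : Chains ((vs₁[i₀]'(by omega)) :: [vs₂[j]'hjv]) [es₁[i₀]] := by
          refine ⟨(chains_getElem hch₁ i₀ hi₀ (by omega)).1, ?_, trivial⟩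
          rw [← hjF]
          exact (chains_getElem hch₂ j hj (by omega)).1
        have hpre : Chains (vs₁.take i₀ ++ [vs₁[i₀]'(by omega)]) (es₁.take i₀) := by
          rw [← take_succ' (by omega)]
          exact chains_take i₀ hch₁
        have hfin := chains_append hpre hstep
        have hveq : vs₁.take (i₀+1) ++ [vs₂[j]'hjv] =
            vs₁.take i₀ ++ (vs₁[i₀]'(by omega)) :: [vs₂[j]'hjv] := by
          rw [take_succ' (show i₀ < vs₁.length by omega), List.append_assoc]
          rfl
        have heeq : es₁.take (i₀+1) = es₁.take i₀ ++ [es₁[i₀]] := take_succ' hi₀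
        rw [hveq, heeq]
        exact hfin
      · exact chains_take j hch₂
      · apply head?_append'
        rw [head?_take' (by omega)]; exact hh₁
      · rw [head?_take' (by omega)]; exact hh₂
      · exact List.getLast?_concat
      · exact getLast?_take' hjv
      · -- nodup l₁
        rw [List.nodup_append']
        refine ⟨(List.take_sublist _ _).nodup h₁.1, List.nodup_singleton _, ?_⟩
        intro x hx hx2
        simp only [List.mem_singleton] at hx2
        subst hx2
        obtain ⟨i, hilt, hi', hieq⟩ := mem_take_getElem hx
        rcases Nat.eq_zero_or_pos i with rfl | hi1
        · have h4 : vs₂[0]'(by omega) = vs₂[j]'hjv := by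
            rw [hv₂0, ← hieq]
            exact hv₁0.symm
          have := h₂.1.getElem_inj_iff.mp h4
          omega
        · exact hminv i hi1 (by omega) (hieq ▸ List.getElem_mem hjv)
      · exact (List.take_sublist _ _).nodup h₂.1
      · exact (List.take_sublist _ _).nodup h₁.2.1
      · exact (List.take_sublist _ _).nodup h₂.2.1
      · -- vertex disjointness
        intro x hx hx2
        rcases List.mem_append.mp hx with hx | hx
        · obtain ⟨i, hilt, hi', hieq⟩ := mem_take_getElem hx
          rcases Nat.eq_zero_or_pos i with rfl | hi1
          · left; rw [← hieq, hv₁0]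
          · exfalso
            exact hminv i hi1 (by omega) (hieq ▸ (List.take_sublist _ _).subset hx2)
        · right; simpa using hx
      · -- edge disjointness
        intro f hf hf2
        obtain ⟨i, hilt, hi', hieq⟩ := mem_take_getElem hf
        have hf2' : f ∈ es₂ := (List.take_sublist _ _).subset hf2
        rcases Nat.lt_or_ge i i₀ with hii | hii
        · exact hmine i hii (hieq ▸ hf2')
        · have : i = i₀ := by omega
          subst this
          -- f = es₁[i₀] = es₂[j] ∈ es₂.take j : contradicts nodup es₂
          obtain ⟨j', hj'lt, hj'', hjeq⟩ := mem_take_getElem hf2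
          have h4 : es₂[j']'hj'' = es₂[j]'hj := by
            rw [hjeq, ← hieq]
            exact hjF.symm
          have := h₂.2.1.getElem_inj_iff.mp h4
          omega
      · exact fun f hf => h₁.2.2.1 f ((List.take_sublist _ _).subset hf)
      · exact fun f hf => h₂.2.2.1 f ((List.take_sublist _ _).subset hf)
      · rw [List.length_take]; omega
      · rw [List.length_take]; omega
  · -- vertex collision
    have hX : vs₁[i₀+1]'(by omega) ∈ vs₂ := by
      rcases hcoll with h | h
      · exact h
      · exact absurd h hF
    obtain ⟨j, hj, hjX⟩ := List.mem_iff_getElem.mp hX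
    have hj1 : 1 ≤ j := by
      rcases Nat.eq_zero_or_pos j with rfl | h; swap; exact h
      exfalso
      have h4 : vs₁[0]'(by omega) = vs₁[i₀+1]'(by omega) := by
        rw [hv₁0, ← hjX]
        exact hv₂0.symm
      have := h₁.1.getElem_inj_iff.mp h4
      omega
    have hjes : j ≤ es₂.length := by omega
    apply no_two_chains htree (l₁ := vs₁.take (i₀+2)) (E₁ := es₁.take (i₀+1))
      (l₂ := vs₂.take (j+1)) (E₂ := es₂.take j) (a := a) (c := vs₁[i₀+1]'(by omega))
    · exact chains_take (i₀+1) hch₁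
    · exact chains_take j hch₂
    · rw [head?_take' (by omega)]; exact hh₁
    · rw [head?_take' (by omega)]; exact hh₂
    · exact getLast?_take' (by omega)
    · rw [getLast?_take' hj]
      rw [hjX]
    · exact (List.take_sublist _ _).nodup h₁.1
    · exact (List.take_sublist _ _).nodup h₂.1
    · exact (List.take_sublist _ _).nodup h₁.2.1
    · exact (List.take_sublist _ _).nodup h₂.2.1
    · -- vertex disjointness
      intro x hx hx2
      obtain ⟨i, hilt, hi', hieq⟩ := mem_take_getElem hx
      rcases Nat.eq_zero_or_pos i with rfl | hi1
      · left; rw [← hieq, hv₁0]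
      · rcases Nat.lt_or_ge i (i₀+1) with hii | hii
        · exfalso
          exact hminv i hi1 (by omega) (hieq ▸ (List.take_sublist _ _).subset hx2)
        · have : i = i₀ + 1 := by omega
          subst this
          right; rw [← hieq]
    · -- edge disjointness
      intro f hf hf2
      obtain ⟨i, hilt, hi', hieq⟩ := mem_take_getElem hf
      have hf2' : f ∈ es₂ := (List.take_sublist _ _).subset hf2
      rcases Nat.lt_or_ge i i₀ with hii | hii
      · exact hmine i hii (hieq ▸ hf2')
      · have : i = i₀ := by omega
        subst this
        exact hF (hieq ▸ hf2')
    · exact fun f hf => h₁.2.2.1 f ((List.take_sublist _ _).subset hf)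
    · exact fun f hf => h₂.2.2.1 f ((List.take_sublist _ _).subset hf)
    · rw [List.length_take]; omega
    · rw [List.length_take]; omega

end TreeLemmas
section Release

variable {V : Type*} [DecidableEq V]

/-- The vertex map of edge-releasing: vertices of `e` other than `v` are sent to `v`. -/
noncomputable def rel (e : Finset V) (v : V) : V → V :=
  fun x => if x ∈ e ∧ x ≠ v then v else x

/-- The edge map of edge-releasing. -/
noncomputable def relE (e : Finset V) (v : V) : Finset V → Finset V :=
  fun f => if v ∈ f ∨ Disjoint f e then f else insert v (f \ e)

lemma rel_eq_self {e : Finset V} {v x : V} (h : x ∉ e ∨ x = v) : rel e v x = x := by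
  unfold rel
  rw [if_neg]
  rintro ⟨h1, h2⟩
  rcases h with h | h
  · exact h h1
  · exact h2 h

lemma rel_eq_v {e : Finset V} {v x : V} (h1 : x ∈ e) (h2 : x ≠ v) : rel e v x = v := by
  unfold rel; rw [if_pos ⟨h1, h2⟩]

lemma rel_mem_e {e : Finset V} {v x : V} (hv : v ∈ e) (hx : x ∈ e) : rel e v x ∈ e := by
  by_cases h : x ∈ e ∧ x ≠ v
  · rw [rel_eq_v h.1 h.2]; exact hv
  · have : x ∉ e ∨ x = v := by
      by_cases hxe : x ∈ e
      · right; by_contra hc; exact h ⟨hxe, hc⟩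
      · left; exact hxe
    rw [rel_eq_self this]; exact hx

lemma rel_mem_relE {e : Finset V} {v x : V} {f : Finset V} (hx : x ∈ f) :
    rel e v x ∈ relE e v f := by
  unfold relE
  by_cases hp : v ∈ f ∨ Disjoint f e
  · rw [if_pos hp]
    by_cases hb : x ∈ e ∧ x ≠ v
    · rw [rel_eq_v hb.1 hb.2]
      rcases hp with h | h
      · exact h
      · exact absurd hb.1 (Finset.disjoint_left.mp h hx)
    · have hgood : x ∉ e ∨ x = v := by
        by_cases hxe : x ∈ e
        · right; by_contra hc; exact hb ⟨hxe, hc⟩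
        · left; exact hxe
      rw [rel_eq_self hgood]; exact hx
  · rw [if_neg hp]
    push_neg at hp
    by_cases hb : x ∈ e ∧ x ≠ v
    · rw [rel_eq_v hb.1 hb.2]; exact Finset.mem_insert_self v _
    · have hxv : x ≠ v := fun hc => hp.1 (hc ▸ hx)
      have hxe : x ∉ e := fun hc => hb ⟨hc, hxv⟩
      rw [rel_eq_self (Or.inl hxe)]
      exact Finset.mem_insert_of_mem (Finset.mem_sdiff.mpr ⟨hx, hxe⟩)

lemma relE_mem {E E' : Finset (Finset V)} {e : Finset V} {v : V}
    (hE' : E' = E.filter (fun f => v ∈ f ∨ Disjoint f e) ∪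
      (E.filter (fun f => ¬ (v ∈ f ∨ Disjoint f e))).image (fun f => insert v (f \ e)))
    {f : Finset V} (hf : f ∈ E) : relE e v f ∈ E' := by
  subst hE'
  unfold relE
  by_cases hp : v ∈ f ∨ Disjoint f e
  · rw [if_pos hp]
    exact Finset.mem_union_left _ (Finset.mem_filter.mpr ⟨hf, hp⟩)
  · rw [if_neg hp]
    exact Finset.mem_union_right _ (Finset.mem_image.mpr ⟨f, Finset.mem_filter.mpr ⟨hf, hp⟩, rfl⟩)

lemma relE_eq_of_mem {e : Finset V} {v : V} {f : Finset V} (h : v ∈ f) : relE e v f = f := by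
  unfold relE; rw [if_pos (Or.inl h)]

variable {E E' : Finset (Finset V)} {e : Finset V} {v : V}

/-- mapping a path through `rel`/`relE` gives a walk in `E'`. -/
lemma walk_map_bound
    (hE' : E' = E.filter (fun f => v ∈ f ∨ Disjoint f e) ∪
      (E.filter (fun f => ¬ (v ∈ f ∨ Disjoint f e))).image (fun f => insert v (f \ e)))
    {vs es} (h : IsPath E vs es) {a b : V}
    (hh : vs.head? = some a) (hl : vs.getLast? = some b) :
    hdist E' (rel e v a) (rel e v b) ≤ es.length := by
  have hch : Chains (vs.map (rel e v)) (es.map (relE e v)) :=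
    chains_map _ _ h.2.2.2 (fun x _ f _ hxf => rel_mem_relE hxf)
  have hmem : ∀ g ∈ es.map (relE e v), g ∈ E' := by
    intro g hg
    obtain ⟨f, hf, rfl⟩ := List.mem_map.mp hg
    exact relE_mem hE' (h.2.2.1 f hf)
  have := hdist_le_of_walk hch hmem
    (by rw [List.head?_map, hh]; rfl) (getLast?_map' _ hl)
  simpa using this

/-- prepending the edge `e` to a mapped path. -/
lemma walk_prepend_bound
    (hE' : E' = E.filter (fun f => v ∈ f ∨ Disjoint f e) ∪
      (E.filter (fun f => ¬ (v ∈ f ∨ Disjoint f e))).image (fun f => insert v (f \ e)))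
    (he' : e ∈ E') {vs es} (h : IsPath E vs es) {a b u : V}
    (hh : vs.head? = some a) (hl : vs.getLast? = some b)
    (hu : u ∈ e) (hae : rel e v a ∈ e) :
    hdist E' u (rel e v b) ≤ es.length + 1 := by
  obtain ⟨t, rfl⟩ := head?_eq_cons hh
  have hch0 : Chains ((a :: t).map (rel e v)) (es.map (relE e v)) :=
    chains_map _ _ h.2.2.2 (fun x _ f _ hxf => rel_mem_relE hxf)
  have hch : Chains (u :: (a :: t).map (rel e v)) (e :: es.map (relE e v)) :=
    ⟨hu, hae, hch0⟩
  have hmem : ∀ g ∈ e :: es.map (relE e v), g ∈ E' := by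
    intro g hg
    rcases List.mem_cons.mp hg with rfl | hg
    · exact he'
    · obtain ⟨f, hf, rfl⟩ := List.mem_map.mp hg
      exact relE_mem hE' (h.2.2.1 f hf)
  have hlast : (u :: (a :: t).map (rel e v)).getLast? = some (rel e v b) := by
    rw [getLast?_cons' u (by simp)]
    exact getLast?_map' _ hl
  have := hdist_le_of_walk hch hmem rfl hlast
  simpa using this

/-- keeping the first edge of a path whose image contains `u`. -/
lemma walk_keep_bound
    (hE' : E' = E.filter (fun f => v ∈ f ∨ Disjoint f e) ∪
      (E.filter (fun f => ¬ (v ∈ f ∨ Disjoint f e))).image (fun f => insert v (f \ e)))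
    {vs : List V} {f : Finset V} {es' : List (Finset V)}
    (h : IsPath E vs (f :: es')) {a b u : V}
    (hh : vs.head? = some a) (hl : vs.getLast? = some b)
    (hu : u ∈ relE e v f) :
    hdist E' u (rel e v b) ≤ (f :: es').length := by
  obtain ⟨t, rfl⟩ := head?_eq_cons hh
  match t, h.2.2.2 with
  | [], hch => exact absurd hch chains_single_cons
  | a₂ :: t', hch =>
      have hch0 : Chains ((a₂ :: t').map (rel e v)) (es'.map (relE e v)) :=
        chains_map _ _ hch.2.2 (fun x hx g hg hxf =>
          rel_mem_relE hxf)
      have hwch : Chains (u :: (a₂ :: t').map (rel e v)) (relE e v f :: es'.map (relE e v)) :=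
        ⟨hu, rel_mem_relE hch.2.1, hch0⟩
      have hmem : ∀ g ∈ relE e v f :: es'.map (relE e v), g ∈ E' := by
        intro g hg
        rcases List.mem_cons.mp hg with rfl | hg
        · exact relE_mem hE' (h.2.2.1 f (by simp))
        · obtain ⟨f', hf', rfl⟩ := List.mem_map.mp hg
          exact relE_mem hE' (h.2.2.1 f' (by simp [hf']))
      have hlast : (u :: (a₂ :: t').map (rel e v)).getLast? = some (rel e v b) := by
        rw [getLast?_cons' u (by simp)]
        apply getLast?_map'
        rw [← List.getLast?_cons_cons (a := a) (b := a₂) (l := t')]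
        exact hl
      have := hdist_le_of_walk hwch hmem rfl hlast
      simpa using this

end Release
section Main

variable {V : Type*} [DecidableEq V] [Fintype V]

/-- The key estimate when `u` is a moved vertex and `w` is not. -/
lemma key_bound {E E' : Finset (Finset V)} {e : Finset V} {v : V}
    (hconn : HConnected E) (htree : ∀ vs es, ¬ IsCycle E vs es)
    (he : e ∈ E) (hv : v ∈ e)
    (hE' : E' = E.filter (fun f => v ∈ f ∨ Disjoint f e) ∪
      (E.filter (fun f => ¬ (v ∈ f ∨ Disjoint f e))).image (fun f => insert v (f \ e)))
    {u w : V} (hu : u ∈ e) (huv : u ≠ v) (hw : w ∉ e ∨ w = v) :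
    hdist E' u w ≤ hdiam E := by
  have he' : e ∈ E' := by
    rw [hE']
    exact Finset.mem_union_left _ (Finset.mem_filter.mpr ⟨he, Or.inl hv⟩)
  by_cases huw : u = w
  · subst huw
    rw [hdist_self]
    exact Nat.zero_le _
  have hrw : rel e v w = w := rel_eq_self hw
  have hru : rel e v u = v := rel_eq_v hu huv
  have hl_le : hdist E u w ≤ hdiam E := hdist_le_hdiam hconn u w
  have hm_le : hdist E v w ≤ hdiam E := hdist_le_hdiam hconn v w
  have hl1 : 1 ≤ hdist E u w := one_le_hdist hconn huw
  by_cases hvw : v = w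
  · -- `w = v` : use the single edge `e`
    have hwe : w ∈ e := hvw ▸ hv
    have hp : IsPath E' [u, w] [e] := by
      refine ⟨by simp [huw], by simp, ?_, ⟨hu, hwe, trivial⟩⟩
      intro g hg
      simp only [List.mem_singleton] at hg
      subst hg; exact he'
    have h1 := hdist_le_of_path hp rfl rfl
    exact le_trans (le_trans h1 hl1) hl_le
  have hm1 : 1 ≤ hdist E v w := one_le_hdist hconn hvw
  by_cases case1 : ∃ vs es f es', IsPath E vs es ∧ es.length = hdist E u w ∧
      vs.head? = some u ∧ vs.getLast? = some w ∧ es = f :: es' ∧ v ∈ f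
  · obtain ⟨vs, es, f, es', hp, hlen, hh, hlast, rfl, hvf⟩ := case1
    obtain ⟨t, rfl⟩ := head?_eq_cons hh
    have huf : u ∈ f := by
      match t, hp.2.2.2 with
      | [], hch => exact absurd hch chains_single_cons
      | b :: t', hch => exact hch.1
    have hub : u ∈ relE e v f := by rw [relE_eq_of_mem hvf]; exact huf
    have hkb := walk_keep_bound hE' hp hh hlast hub
    rw [hrw] at hkb
    exact le_trans (le_trans hkb (le_of_eq hlen)) hl_le
  by_cases case2 : ∃ vs es g es', IsPath E vs es ∧ es.length = hdist E v w ∧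
      vs.head? = some v ∧ vs.getLast? = some w ∧ es = g :: es' ∧ u ∈ g
  · obtain ⟨vs, es, g, es', hp, hlen, hh, hlast, rfl, hug⟩ := case2
    obtain ⟨t, rfl⟩ := head?_eq_cons hh
    have hvg : v ∈ g := by
      match t, hp.2.2.2 with
      | [], hch => exact absurd hch chains_single_cons
      | b :: t', hch => exact hch.1
    have hub : u ∈ relE e v g := by rw [relE_eq_of_mem hvg]; exact hug
    have hkb := walk_keep_bound hE' hp hh hlast hub
    rw [hrw] at hkb
    exact le_trans (le_trans hkb (le_of_eq hlen)) hm_le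
  obtain ⟨pvs, pes, hP, hPlen, hPh, hPl⟩ := exists_path_hdist hconn u w
  obtain ⟨qvs, qes, hQ, hQlen, hQh, hQl⟩ := exists_path_hdist hconn v w
  have bound1 : hdist E' u w ≤ hdist E u w + 1 := by
    have hb := walk_prepend_bound hE' he' hP hPh hPl hu (by rw [hru]; exact hv)
    rw [hrw, hPlen] at hb
    exact hb
  have bound2 : hdist E' u w ≤ hdist E v w + 1 := by
    have hb := walk_prepend_bound hE' he' hQ hQh hQl hu
      (by rw [rel_eq_self (Or.inr rfl)]; exact hv)
    rw [hrw, hQlen] at hb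
    exact hb
  rcases lt_trichotomy (hdist E u w) (hdist E v w) with hlm | hlm | hlm
  · exact le_trans bound1 (le_trans (by omega) hm_le)
  · exfalso
    have hpes_ne : pes ≠ [] := by
      intro hc; rw [hc] at hPlen; simp at hPlen; omega
    have hqes_ne : qes ≠ [] := by
      intro hc; rw [hc] at hQlen; simp at hQlen; omega
    obtain ⟨f₁, pes', rfl⟩ : ∃ f t, pes = f :: t := by
      cases pes with
      | nil => exact absurd rfl hpes_ne
      | cons x t => exact ⟨x, t, rfl⟩
    obtain ⟨g₁, qes', rfl⟩ : ∃ g t, qes = g :: t := by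
      cases qes with
      | nil => exact absurd rfl hqes_ne
      | cons x t => exact ⟨x, t, rfl⟩
    have hvf₁ : v ∉ f₁ := fun hc =>
      case1 ⟨pvs, f₁ :: pes', f₁, pes', hP, hPlen, hPh, hPl, rfl, hc⟩
    have hug₁ : u ∉ g₁ := fun hc =>
      case2 ⟨qvs, g₁ :: qes', g₁, qes', hQ, hQlen, hQh, hQl, rfl, hc⟩
    have hqlenv := chains_length hQ.2.2.2
    by_cases huq : u ∈ qvs
    · obtain ⟨i, hi, hiq⟩ := List.mem_iff_getElem.mp huq
      have hi1 : 1 ≤ i := by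
        rcases Nat.eq_zero_or_pos i with rfl | h
        · exfalso
          have h0 : qvs[0]'(by omega) = v := head?_getElem hQh (by omega)
          rw [h0] at hiq
          exact huv hiq.symm
        · exact h
      have hsuf := path_drop hQ i (by omega)
      have hh' : (qvs.drop i).head? = some u := by
        rw [List.head?_drop, List.getElem?_eq_getElem hi, hiq]
      have hl' : (qvs.drop i).getLast? = some w := by
        rw [getLast?_drop' hi]; exact hQl
      have hle := hdist_le_of_path hsuf hh' hl'
      rw [List.length_drop] at hle
      have hq' : (g₁ :: qes').length = hdist E v w := hQlen
      omega
    · by_cases heq : e ∈ g₁ :: qes'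
      · obtain ⟨j, hj, hje⟩ := List.mem_iff_getElem.mp heq
        rcases Nat.eq_zero_or_pos j with rfl | hj1
        · have h0 : (g₁ :: qes')[0] = g₁ := rfl
          rw [h0] at hje
          exact hug₁ (by rw [hje]; exact hu)
        · have hjump := path_jump hQ hj huq (by rw [hje]; exact hu)
          have hle := hdist_le_of_path hjump.1 rfl (hjump.2.trans hQl)
          rw [List.length_drop] at hle
          have hq' : (g₁ :: qes').length = hdist E v w := hQlen
          omega
      · have hR : IsPath E (u :: qvs) (e :: g₁ :: qes') :=
          path_cons hQ hQh he hu hv huq heq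
        have hfe := same_first_edge htree hP hR hPh rfl hPl
          (by rw [getLast?_cons' u (chains_ne_nil hQ.2.2.2)]; exact hQl)
          (by simp) (by simp)
        simp only [List.head?_cons, Option.some.injEq] at hfe
        exact hvf₁ (by rw [hfe]; exact hv)
  · exact le_trans bound2 (le_trans (by omega) hl_le)

lemma pair_bound {E E' : Finset (Finset V)} {e : Finset V} {v : V}
    (hconn : HConnected E) (htree : ∀ vs es, ¬ IsCycle E vs es)
    (he : e ∈ E) (hv : v ∈ e)
    (hE' : E' = E.filter (fun f => v ∈ f ∨ Disjoint f e) ∪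
      (E.filter (fun f => ¬ (v ∈ f ∨ Disjoint f e))).image (fun f => insert v (f \ e)))
    (u w : V) : hdist E' u w ≤ hdiam E := by
  by_cases huw : u = w
  · subst huw
    rw [hdist_self]
    exact Nat.zero_le _
  by_cases hbu : u ∈ e ∧ u ≠ v
  · by_cases hbw : w ∈ e ∧ w ≠ v
    · have he' : e ∈ E' := by
        rw [hE']
        exact Finset.mem_union_left _ (Finset.mem_filter.mpr ⟨he, Or.inl hv⟩)
      have hp : IsPath E' [u, w] [e] := by
        refine ⟨by simp [huw], by simp, ?_, ⟨hbu.1, hbw.1, trivial⟩⟩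
        intro g hg
        simp only [List.mem_singleton] at hg
        subst hg; exact he'
      exact le_trans (hdist_le_of_path hp rfl rfl)
        (le_trans (one_le_hdist hconn huw) (hdist_le_hdiam hconn u w))
    · have hwgood : w ∉ e ∨ w = v := by
        by_cases hwe : w ∈ e
        · right; by_contra hc; exact hbw ⟨hwe, hc⟩
        · left; exact hwe
      exact key_bound hconn htree he hv hE' hbu.1 hbu.2 hwgood
  · have hugood : u ∉ e ∨ u = v := by
      by_cases hue : u ∈ e
      · right; by_contra hc; exact hbu ⟨hue, hc⟩
      · left; exact hue
    by_cases hbw : w ∈ e ∧ w ≠ v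
    · rw [hdist_symm]
      exact key_bound hconn htree he hv hE' hbw.1 hbw.2 hugood
    · have hwgood : w ∉ e ∨ w = v := by
        by_cases hwe : w ∈ e
        · right; by_contra hc; exact hbw ⟨hwe, hc⟩
        · left; exact hwe
      obtain ⟨vs, es, hp, hlen, hh, hl⟩ := exists_path_hdist hconn u w
      have hb := walk_map_bound hE' hp hh hl
      rw [rel_eq_self hugood, rel_eq_self hwgood, hlen] at hb
      exact le_trans hb (hdist_le_hdiam hconn u w)

end Main
/-- edge-releasing a non-pendent edge `e` at `v ∈ e` does not increase
the diameter of a `k`-uniform supertree. -/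
theorem edge_releasing_diam (k : ℕ) (hk : 2 ≤ k) {V : Type*} [Fintype V] [DecidableEq V]
    (E : Finset (Finset V)) (hG : IsSupertree k E)
    (e : Finset V) (he : e ∈ E) (v : V) (hv : v ∈ e)
    (hnp : ¬ IsPendentEdge k E e)
    (E' : Finset (Finset V))
    (hE' : E' = E.filter (fun f => v ∈ f ∨ Disjoint f e) ∪
      (E.filter (fun f => ¬ (v ∈ f ∨ Disjoint f e))).image (fun f => insert v (f \ e))) :
    hdiam E' ≤ hdiam E := by
  obtain ⟨-, hconn, htree⟩ := hG
  rcases isEmpty_or_nonempty V with hV | hV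
  · have hempty : {d | ∃ u v : V, hdist E' u v = d} = ∅ := by
      ext d
      simp only [Set.mem_setOf_eq, Set.mem_empty_iff_false, iff_false]
      rintro ⟨u, -, -⟩
      exact hV.false u
    rw [hdiam, hempty, csSup_empty]
    exact Nat.zero_le _
  · show sSup {d | ∃ u v : V, hdist E' u v = d} ≤ hdiam E
    apply csSup_le
    · exact ⟨hdist E' (Classical.arbitrary V) (Classical.arbitrary V),
        Classical.arbitrary V, Classical.arbitrary V, rfl⟩
    · rintro d ⟨u, w, rfl⟩
      exact pair_bound hconn htree he hv hE' u w

end SLT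
end

section
/- Let m ≥ 4 and k ≥ 2. Among the k-uniform supertrees with m edges and diameter 3, consisting of a loose path v_1,e_1,v_2,e_2,v_3,e_3,v_4 with a ≥ 1 pendent edges attached at v_2 and b ≥ 1 pendent edges attached at v_3 (a + b = m − 3), the signless Laplacian spectral radius is strictly maximized when {a,b} = {m−4, 1} or the supertree is S_1(m,3,k) (all m−3 pendent edges at v_2). More precisely: if a, b ≥ 2 and x is the principal eigenvector of Q(G) with x_{v_2} ≥ x_{v_3}, then moving b−1 pendent edges from v_3 to v_2 strictly increases the signless Laplacian spectral radius. -/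
open scoped Classical BigOperators

namespace SLT

variable {V : Type*}

/-- A pendent edge at `v`: an edge containing `v` all of whose other vertices have
degree 1. -/
def IsPendentEdgeAt (E : Finset (Finset V)) (f : Finset V) (v : V) : Prop :=
  f ∈ E ∧ v ∈ f ∧ ∀ w ∈ f, w ≠ v → degree E w = 1


/-- Auxiliary: `(c+t)^k - c^k ≤ k t (c+t)^(k-1)` for `0 ≤ c`, `0 ≤ t`. -/
lemma aux_pow_sub_pow_le {c t : ℝ} (hc : 0 ≤ c) (ht : 0 ≤ t) (k : ℕ) :
    (c + t) ^ k - c ^ k ≤ k * t * (c + t) ^ (k - 1) := by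
  have h := geom_sum₂_mul (c + t) c k
  have hsub : (c + t) - c = t := by ring
  rw [hsub] at h
  rw [← h]
  have hbound : (∑ i ∈ Finset.range k, (c + t) ^ i * c ^ (k - 1 - i)) ≤ k * (c + t) ^ (k - 1) := by
    calc (∑ i ∈ Finset.range k, (c + t) ^ i * c ^ (k - 1 - i))
        ≤ ∑ _i ∈ Finset.range k, (c + t) ^ (k - 1) := by
          apply Finset.sum_le_sum
          intro i hi
          have hik : i ≤ k - 1 := by
            have := Finset.mem_range.mp hi; omega
          calc (c + t) ^ i * c ^ (k - 1 - i)
              ≤ (c + t) ^ i * (c + t) ^ (k - 1 - i) := by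
                apply mul_le_mul_of_nonneg_left (pow_le_pow_left₀ hc (by linarith) _) (by positivity)
            _ = (c + t) ^ (k - 1) := by rw [← pow_add]; congr 1; omega
      _ = k * (c + t) ^ (k - 1) := by
          rw [Finset.sum_const, Finset.card_range, nsmul_eq_mul]
  calc (∑ i ∈ Finset.range k, (c + t) ^ i * c ^ (k - 1 - i)) * t
      ≤ (k * (c + t) ^ (k - 1)) * t := mul_le_mul_of_nonneg_right hbound ht
    _ = k * t * (c + t) ^ (k - 1) := by ring

/-- Homogeneity of the quadratic form for k-uniform hypergraphs. -/
lemma aux_qform_smul {k : ℕ} {E : Finset (Finset V)} (hu : IsUniform k E) (r : ℝ) (x : V → ℝ) :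
    qform k E (fun v => r * x v) = r ^ k * qform k E x := by
  unfold qform
  rw [Finset.mul_sum]
  apply Finset.sum_congr rfl
  intro e he
  rw [Finset.prod_mul_distrib, Finset.prod_const, hu e he, mul_add]
  congr 1
  · rw [Finset.mul_sum]; apply Finset.sum_congr rfl; intro i _; rw [mul_pow]
  · ring

/-- `∑ v, x v * (Q x^{k-1})_v = x^T Q x^{k-1}`. -/
lemma aux_sum_mul_Qcomp [Fintype V] {k : ℕ} (hk : 1 ≤ k)
    {E : Finset (Finset V)} (hu : IsUniform k E) (x : V → ℝ) :
    ∑ v, x v * Qcomp k E x v = qform k E x := by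
  unfold Qcomp qform
  have h1 : ∀ v : V, x v * ∑ e ∈ E.filter (fun e => v ∈ e), (x v ^ (k-1) + ∏ j ∈ e.erase v, x j)
      = ∑ e ∈ E.filter (fun e => v ∈ e), (x v ^ k + ∏ j ∈ e, x j) := by
    intro v
    rw [Finset.mul_sum]
    apply Finset.sum_congr rfl
    intro e he
    rw [mul_add]
    congr 1
    · rw [← pow_succ']
      congr 1; omega
    · exact Finset.mul_prod_erase e x (Finset.mem_filter.mp he).2
  simp_rw [h1]
  rw [Finset.sum_comm' (s' := fun e => e.toList.toFinset) (t' := E) ?_]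
  · apply Finset.sum_congr rfl
    intro e he
    have he' : e.toList.toFinset = e := by simp
    rw [he', Finset.sum_add_distrib, Finset.sum_const, nsmul_eq_mul, hu e he]
  · intro v e
    simp [Finset.mem_filter]
    tauto

/-- Boundedness of the variational set. -/
lemma aux_qrad_bddAbove [Fintype V] {k : ℕ} (hk : k ≠ 0) (E : Finset (Finset V)) :
    BddAbove {r | ∃ x : V → ℝ, (∀ v, 0 ≤ x v) ∧ (∑ v, x v ^ k) = 1 ∧ r = qform k E x} := by
  refine ⟨(1 + k) * E.card, ?_⟩
  rintro r ⟨x, hx0, hxn, rfl⟩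
  have hle1 : ∀ v : V, x v ≤ 1 := by
    intro v
    have h1 : x v ^ k ≤ 1 := by
      rw [← hxn]
      exact Finset.single_le_sum (f := fun v => x v ^ k) (fun i _ => pow_nonneg (hx0 i) k)
        (Finset.mem_univ v)
    exact (pow_le_one_iff_of_nonneg (hx0 v) hk).mp h1
  unfold qform
  calc ∑ e ∈ E, ((∑ i ∈ e, x i ^ k) + (k : ℝ) * ∏ i ∈ e, x i)
      ≤ ∑ _e ∈ E, ((1 : ℝ) + k) := by
        apply Finset.sum_le_sum
        intro e _
        have hs : (∑ i ∈ e, x i ^ k) ≤ 1 := by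
          rw [← hxn]
          apply Finset.sum_le_sum_of_subset_of_nonneg (Finset.subset_univ e)
          intro i _ _; exact pow_nonneg (hx0 i) k
        have hp : (∏ i ∈ e, x i) ≤ 1 :=
          Finset.prod_le_one (fun i _ => hx0 i) (fun i _ => hle1 i)
        have hp' : (k:ℝ) * ∏ i ∈ e, x i ≤ k := by
          calc (k:ℝ) * ∏ i ∈ e, x i ≤ (k:ℝ) * 1 :=
            mul_le_mul_of_nonneg_left hp (by positivity)
          _ = k := mul_one _
        linarith
    _ = (1 + k) * E.card := by rw [Finset.sum_const, nsmul_eq_mul]; ring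

/-- in a diameter-3 supertree consisting of a loose path of length 3
with `a ≥ 2` pendent edges at `v₂` and `b ≥ 2` pendent edges at `v₃`, if `x` is the
principal eigenvector with `x_{v₂} ≥ x_{v₃}`, then moving `b-1` pendent edges from
`v₃` to `v₂` strictly increases the signless Laplacian spectral radius. -/
theorem diameter_three_move (k m a b : ℕ) (hm : 4 ≤ m) (hk : 2 ≤ k)
    (ha : 2 ≤ a) (hb : 2 ≤ b) (hab : a + b = m - 3)
    {V : Type*} [Fintype V] [DecidableEq V]
    (E : Finset (Finset V)) (hG : IsSupertree k E) (hm' : E.card = m)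
    (v1 v2 v3 v4 : V) (e1 e2 e3 : Finset V)
    (he1 : e1 ∈ E) (he2 : e2 ∈ E) (he3 : e3 ∈ E)
    (h12 : e1 ∩ e2 = {v2}) (h23 : e2 ∩ e3 = {v3}) (h13 : e1 ∩ e3 = ∅)
    (hv1 : v1 ∈ e1 ∧ v1 ∉ e2) (hv4 : v4 ∈ e3 ∧ v4 ∉ e2) (hv23 : v2 ≠ v3)
    (A B : Finset (Finset V))
    (hA : ∀ f ∈ A, IsPendentEdgeAt E f v2) (hB : ∀ f ∈ B, IsPendentEdgeAt E f v3)
    (hAcard : A.card = a) (hBcard : B.card = b)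
    (hE : E = {e1, e2, e3} ∪ A ∪ B)
    (hAe : ∀ f ∈ A, f ≠ e1 ∧ f ≠ e2 ∧ f ≠ e3) (hBe : ∀ f ∈ B, f ≠ e1 ∧ f ≠ e2 ∧ f ≠ e3)
    (hAB : Disjoint A B)
    (x : V → ℝ) (hx : IsPrincipalEig k E x) (hx23 : x v3 ≤ x v2)
    (B' : Finset (Finset V)) (hB' : B' ⊆ B) (hB'card : B'.card = b - 1)
    (E' : Finset (Finset V))
    (hE' : E' = (E \ B') ∪ B'.image (fun f => insert v2 (f.erase v3))) :
    qrad k E < qrad k E' := by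
  classical
  obtain ⟨hunif, _hconn, _hacyc⟩ := hG
  obtain ⟨hxpos, hxnorm, hxeig⟩ := hx
  have hk0 : k ≠ 0 := by omega
  have hk1 : 1 ≤ k := by omega
  -- instance normalizers
  have hdegeq : ∀ (F : Finset (Finset V)) (v : V),
      degree F v = (F.filter (fun e => v ∈ e)).card := by
    intro F v; unfold degree; congr!
  have hQeq : ∀ i : V, Qcomp k E x i
      = ∑ e ∈ E.filter (fun e => i ∈ e), (x i ^ (k-1) + ∏ j ∈ e.erase i, x j) := by
    intro i
    unfold Qcomp
    apply Finset.sum_congr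
    · congr!
    · intro e _; congr!
  set q := qrad k E with hqdef
  -- Step 1 : q = qform k E x
  have hq : qform k E x = q := by
    rw [← aux_sum_mul_Qcomp hk1 hunif x]
    have hpt : ∀ v : V, x v * Qcomp k E x v = q * x v ^ k := by
      intro v
      rw [hxeig v, show x v * (q * x v ^ (k-1)) = q * (x v * x v ^ (k-1)) by ring]
      congr 1
      rw [← pow_succ']
      congr 1; omega
    simp only [hpt]
    rw [← Finset.mul_sum, hxnorm, mul_one]
  -- basic facts about v2 and B'
  have hv2e1 : v2 ∈ e1 ∧ v2 ∈ e2 := by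
    have h : v2 ∈ e1 ∩ e2 := by rw [h12]; exact Finset.mem_singleton_self v2
    exact ⟨(Finset.mem_inter.mp h).1, (Finset.mem_inter.mp h).2⟩
  have he12 : e1 ≠ e2 := by
    intro h
    have h2 : e1 ∩ e2 = e1 := by rw [h, Finset.inter_self]
    rw [h12] at h2
    have hc := hunif e1 he1
    rw [← h2, Finset.card_singleton] at hc
    omega
  have hdeg2 : 2 ≤ degree E v2 := by
    rw [hdegeq]
    have hsub : ({e1, e2} : Finset (Finset V)) ⊆ E.filter (fun e => v2 ∈ e) := by
      intro e he
      simp only [Finset.mem_insert, Finset.mem_singleton] at he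
      rcases he with rfl | rfl
      · exact Finset.mem_filter.mpr ⟨he1, hv2e1.1⟩
      · exact Finset.mem_filter.mpr ⟨he2, hv2e1.2⟩
    have h := Finset.card_le_card hsub
    rwa [Finset.card_pair he12] at h
  have hBf : ∀ f ∈ B', f ∈ E ∧ v3 ∈ f ∧ ∀ w ∈ f, w ≠ v3 → degree E w = 1 :=
    fun f hf => hB f (hB' hf)
  have hv2nf : ∀ f ∈ B', v2 ∉ f := by
    intro f hf hmem
    have h := (hBf f hf).2.2 v2 hmem hv23
    omega
  set g : Finset V → Finset V := fun f => insert v2 (f.erase v3) with hgdef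
  have hv2gf : ∀ f ∈ B', v2 ∈ g f := fun f _ => Finset.mem_insert_self _ _
  have hgerase : ∀ f ∈ B', (g f).erase v2 = f.erase v3 := by
    intro f hf
    exact Finset.erase_insert (fun h => hv2nf f hf (Finset.mem_of_mem_erase h))
  have hgcard : ∀ f ∈ B', (g f).card = k := by
    intro f hf
    have h1 : v2 ∉ f.erase v3 := fun h => hv2nf f hf (Finset.mem_of_mem_erase h)
    have h2 := hunif f (hBf f hf).1
    rw [hgdef]
    simp only []
    rw [Finset.card_insert_of_notMem h1, Finset.card_erase_of_mem (hBf f hf).2.1, h2]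
    omega
  have hginj : ∀ f ∈ B', ∀ f' ∈ B', g f = g f' → f = f' := by
    intro f hf f' hf' h
    have h2 : f.erase v3 = f'.erase v3 := by
      rw [← hgerase f hf, ← hgerase f' hf', h]
    have h3 := congrArg (insert v3) h2
    rwa [Finset.insert_erase (hBf f hf).2.1, Finset.insert_erase (hBf f' hf').2.1] at h3
  have hgnotE : ∀ f ∈ B', g f ∉ E := by
    intro f hf hmem
    have hfc : f.card = k := hunif f (hBf f hf).1
    have hne : (f.erase v3).Nonempty := by
      rw [← Finset.card_pos, Finset.card_erase_of_mem (hBf f hf).2.1, hfc]; omega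
    obtain ⟨w, hw⟩ := hne
    have hwf : w ∈ f := Finset.mem_of_mem_erase hw
    have hwv3 : w ≠ v3 := Finset.ne_of_mem_erase hw
    have hdw : degree E w = 1 := (hBf f hf).2.2 w hwf hwv3
    have hfgne : f ≠ g f := fun h => hv2nf f hf (h ▸ hv2gf f hf)
    have hdw2 : 2 ≤ degree E w := by
      rw [hdegeq]
      have hsub : ({f, g f} : Finset (Finset V)) ⊆ E.filter (fun e => w ∈ e) := by
        intro e he
        simp only [Finset.mem_insert, Finset.mem_singleton] at he
        rcases he with rfl | rfl
        · exact Finset.mem_filter.mpr ⟨(hBf _ hf).1, hwf⟩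
        · exact Finset.mem_filter.mpr ⟨hmem, Finset.mem_insert_of_mem hw⟩
      have h := Finset.card_le_card hsub
      rwa [Finset.card_pair hfgne] at h
    omega
  have hB'E : B' ⊆ E := fun f hf => (hBf f hf).1
  have hB'ne : B'.Nonempty := Finset.card_pos.mp (by rw [hB'card]; omega)
  have hdisjim : Disjoint (E \ B') (B'.image g) := by
    rw [Finset.disjoint_right]
    intro e he hmem
    obtain ⟨f, hf, rfl⟩ := Finset.mem_image.mp he
    exact hgnotE f hf (Finset.mem_sdiff.mp hmem).1
  have hunif' : IsUniform k E' := by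
    intro e he
    rw [hE'] at he
    rcases Finset.mem_union.mp he with h | h
    · exact hunif e (Finset.mem_sdiff.mp h).1
    · obtain ⟨f, hf, rfl⟩ := Finset.mem_image.mp h
      exact hgcard f hf
  -- splitting the quadratic form
  have hsplit' : ∀ z : V → ℝ, qform k E' z
      = (∑ e ∈ E \ B', ((∑ i ∈ e, z i ^ k) + k * ∏ i ∈ e, z i))
        + ∑ f ∈ B', ((∑ i ∈ g f, z i ^ k) + k * ∏ i ∈ g f, z i) := by
    intro z
    rw [hE']
    unfold qform
    rw [Finset.sum_union hdisjim, Finset.sum_image hginj]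
  have hsplit : ∀ z : V → ℝ, qform k E z
      = (∑ e ∈ E \ B', ((∑ i ∈ e, z i ^ k) + k * ∏ i ∈ e, z i))
        + ∑ f ∈ B', ((∑ i ∈ f, z i ^ k) + k * ∏ i ∈ f, z i) := by
    intro z
    unfold qform
    rw [Finset.sum_sdiff hB'E]
  -- filter of E' at v2
  have hdisjF : Disjoint (E.filter (fun e => v2 ∈ e)) (B'.image g) := by
    rw [Finset.disjoint_right]
    intro e he hmem
    obtain ⟨f, hf, rfl⟩ := Finset.mem_image.mp he
    exact hgnotE f hf (Finset.mem_filter.mp hmem).1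
  have hfilt : E'.filter (fun e => v2 ∈ e) = E.filter (fun e => v2 ∈ e) ∪ B'.image g := by
    rw [hE', Finset.filter_union]
    congr 1
    · ext e
      simp only [Finset.mem_filter, Finset.mem_sdiff]
      constructor
      · rintro ⟨⟨h1, _⟩, h2⟩; exact ⟨h1, h2⟩
      · rintro ⟨h1, h2⟩
        exact ⟨⟨h1, fun hb => hv2nf e hb h2⟩, h2⟩
    · apply Finset.filter_true_of_mem
      intro e he
      obtain ⟨f, hf, rfl⟩ := Finset.mem_image.mp he
      exact hv2gf f hf
  -- the eigen equation at v2
  have heig2 : ((E.filter (fun e => v2 ∈ e)).card : ℝ) * x v2 ^ (k-1)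
      + (∑ e ∈ E.filter (fun e => v2 ∈ e), ∏ j ∈ e.erase v2, x j) = q * x v2 ^ (k-1) := by
    have h := hxeig v2
    rw [hQeq v2] at h
    rw [Finset.sum_add_distrib, Finset.sum_const, nsmul_eq_mul] at h
    exact h
  -- positivity facts
  have hcpos : 0 < x v2 := hxpos v2
  have hck1pos : 0 < x v2 ^ (k-1) := pow_pos hcpos _
  have hPpos : 0 < ∑ f ∈ B', ∏ j ∈ f.erase v3, x j :=
    Finset.sum_pos (fun f _ => Finset.prod_pos (fun j _ => hxpos j)) hB'ne
  have hPige0 : 0 ≤ ∑ e ∈ E.filter (fun e => v2 ∈ e), ∏ j ∈ e.erase v2, x j :=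
    Finset.sum_nonneg (fun e _ => Finset.prod_nonneg (fun j _ => (hxpos j).le))
  -- choice of the perturbation size t
  have hb'1 : (1:ℝ) ≤ (B'.card : ℝ) := by
    have : 1 ≤ B'.card := Finset.card_pos.mpr hB'ne
    exact_mod_cast this
  have hRlt : (max (q - ((E.filter (fun e => v2 ∈ e)).card + B'.card : ℝ)) 0) * x v2 ^ (k-1)
      < (∑ e ∈ E.filter (fun e => v2 ∈ e), ∏ j ∈ e.erase v2, x j)
        + ∑ f ∈ B', ∏ j ∈ f.erase v3, x j := by
    rcases le_or_gt (q - ((E.filter (fun e => v2 ∈ e)).card + B'.card : ℝ)) 0 with h | h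
    · rw [max_eq_right h, zero_mul]
      linarith
    · rw [max_eq_left h.le]
      nlinarith [heig2, mul_le_mul_of_nonneg_right hb'1 hck1pos.le]
  obtain ⟨t, htlt, ht0⟩ : ∃ t : ℝ, ((max (q - ((E.filter (fun e => v2 ∈ e)).card + B'.card : ℝ)) 0)
        * (x v2 + t) ^ (k-1)
      < (∑ e ∈ E.filter (fun e => v2 ∈ e), ∏ j ∈ e.erase v2, x j)
        + ∑ f ∈ B', ∏ j ∈ f.erase v3, x j) ∧ t ∈ Set.Ioi (0:ℝ) := by
    have htend : Filter.Tendsto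
        (fun t : ℝ => (max (q - ((E.filter (fun e => v2 ∈ e)).card + B'.card : ℝ)) 0)
          * (x v2 + t) ^ (k-1)) (nhdsWithin 0 (Set.Ioi (0:ℝ)))
        (nhds ((max (q - ((E.filter (fun e => v2 ∈ e)).card + B'.card : ℝ)) 0)
          * (x v2 + 0) ^ (k-1))) :=
      ((continuous_const.mul ((continuous_const.add continuous_id).pow (k-1))).tendsto 0).mono_left
        nhdsWithin_le_nhds
    have hev := htend.eventually_lt_const (by rw [add_zero]; exact hRlt)
    exact (hev.and eventually_mem_nhdsWithin).exists
  rw [Set.mem_Ioi] at ht0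
  -- the perturbed vector
  set y : V → ℝ := Function.update x v2 (x v2 + t) with hydef
  have hyv2 : y v2 = x v2 + t := Function.update_self v2 (x v2 + t) x
  have hyother : ∀ v : V, v ≠ v2 → y v = x v := fun v hv => Function.update_of_ne hv _ x
  have hy0 : ∀ v, 0 ≤ y v := by
    intro v
    by_cases h : v = v2
    · rw [h, hyv2]; positivity
    · rw [hyother v h]; exact (hxpos v).le
  have hynorm : ∑ v, y v ^ k = 1 + ((x v2 + t)^k - x v2 ^ k) := by
    have h1 : ∑ v, y v ^ k = y v2 ^ k + ∑ v ∈ Finset.univ.erase v2, y v ^ k :=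
      (Finset.add_sum_erase _ _ (Finset.mem_univ v2)).symm
    have h2 : ∑ v ∈ Finset.univ.erase v2, y v ^ k = ∑ v ∈ Finset.univ.erase v2, x v ^ k :=
      Finset.sum_congr rfl (fun v hv => by rw [hyother v (Finset.ne_of_mem_erase hv)])
    have h3 : x v2 ^ k + ∑ v ∈ Finset.univ.erase v2, x v ^ k = 1 := by
      rw [Finset.add_sum_erase Finset.univ (fun v => x v ^ k) (Finset.mem_univ v2)]
      exact hxnorm
    rw [h1, h2, hyv2]; linarith
  -- per-edge comparisons
  have hterm : ∀ e : Finset V, v2 ∈ e →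
      ((∑ i ∈ e, y i ^ k) + k * ∏ i ∈ e, y i) - ((∑ i ∈ e, x i ^ k) + k * ∏ i ∈ e, x i)
      = ((x v2 + t)^k - x v2^k) + k * t * ∏ j ∈ e.erase v2, x j := by
    intro e he
    have hsy : ∑ i ∈ e, y i ^ k = (x v2 + t)^k + ∑ i ∈ e.erase v2, x i ^ k := by
      rw [← Finset.add_sum_erase _ _ he, hyv2]
      congr 1
      exact Finset.sum_congr rfl (fun i hi => by rw [hyother i (Finset.ne_of_mem_erase hi)])
    have hsx : ∑ i ∈ e, x i ^ k = x v2 ^ k + ∑ i ∈ e.erase v2, x i ^ k :=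
      (Finset.add_sum_erase _ _ he).symm
    have hpy : ∏ i ∈ e, y i = (x v2 + t) * ∏ i ∈ e.erase v2, x i := by
      rw [← Finset.mul_prod_erase e y he, hyv2]
      congr 1
      exact Finset.prod_congr rfl (fun i hi => by rw [hyother i (Finset.ne_of_mem_erase hi)])
    have hpx : ∏ i ∈ e, x i = x v2 * ∏ i ∈ e.erase v2, x i := (Finset.mul_prod_erase e x he).symm
    rw [hsy, hsx, hpy, hpx]; ring
  have hterm0 : ∀ e : Finset V, v2 ∉ e →
      ((∑ i ∈ e, y i ^ k) + k * ∏ i ∈ e, y i) = ((∑ i ∈ e, x i ^ k) + k * ∏ i ∈ e, x i) := by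
    intro e he
    have h1 : ∀ i ∈ e, y i = x i := fun i hi => hyother i (fun h => he (h ▸ hi))
    congr 1
    · exact Finset.sum_congr rfl (fun i hi => by rw [h1 i hi])
    · congr 1
      exact Finset.prod_congr rfl h1
  -- the main difference identity
  have hdiff1 : qform k E' y - qform k E' x
      = (((E.filter (fun e => v2 ∈ e)).card + B'.card : ℝ)) * ((x v2 + t)^k - x v2^k)
        + k * t * ((∑ e ∈ E.filter (fun e => v2 ∈ e), ∏ j ∈ e.erase v2, x j)
          + ∑ f ∈ B', ∏ j ∈ f.erase v3, x j) := by
    unfold qform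
    rw [← Finset.sum_sub_distrib]
    rw [← Finset.sum_filter_add_sum_filter_not E' (fun e => v2 ∈ e)]
    have hz : ∑ e ∈ E'.filter (fun e => ¬ v2 ∈ e),
        (((∑ i ∈ e, y i ^ k) + k * ∏ i ∈ e, y i) - ((∑ i ∈ e, x i ^ k) + k * ∏ i ∈ e, x i)) = 0 := by
      apply Finset.sum_eq_zero
      intro e he
      rw [hterm0 e (Finset.mem_filter.mp he).2, sub_self]
    rw [hz, add_zero]
    have hsum : ∑ e ∈ E'.filter (fun e => v2 ∈ e),
        (((∑ i ∈ e, y i ^ k) + k * ∏ i ∈ e, y i) - ((∑ i ∈ e, x i ^ k) + k * ∏ i ∈ e, x i))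
        = ∑ e ∈ E'.filter (fun e => v2 ∈ e),
          (((x v2 + t)^k - x v2^k) + k * t * ∏ j ∈ e.erase v2, x j) :=
      Finset.sum_congr rfl (fun e he => hterm e (Finset.mem_filter.mp he).2)
    rw [hsum, Finset.sum_add_distrib, Finset.sum_const, nsmul_eq_mul, ← Finset.mul_sum, hfilt]
    rw [Finset.card_union_of_disjoint hdisjF, Finset.sum_union hdisjF,
      Finset.card_image_of_injOn (fun a ha b hb h => hginj a ha b hb h),
      Finset.sum_image hginj]
    have herim : ∑ f ∈ B', ∏ j ∈ (g f).erase v2, x j = ∑ f ∈ B', ∏ j ∈ f.erase v3, x j :=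
      Finset.sum_congr rfl (fun f hf => by rw [hgerase f hf])
    rw [herim]
    push_cast
    ring
  -- the shift of the form at x itself
  have hD : qform k E' x - qform k E x
      = ∑ f ∈ B', ((x v2 ^ k - x v3 ^ k) + k * (x v2 - x v3) * ∏ j ∈ f.erase v3, x j) := by
    rw [hsplit' x, hsplit x]
    rw [add_sub_add_left_eq_sub, ← Finset.sum_sub_distrib]
    apply Finset.sum_congr rfl
    intro f hf
    have hnm : v2 ∉ f.erase v3 := fun h => hv2nf f hf (Finset.mem_of_mem_erase h)
    have hsy : ∑ i ∈ g f, x i ^ k = x v2 ^ k + ∑ i ∈ f.erase v3, x i ^ k := by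
      rw [hgdef]; exact Finset.sum_insert hnm
    have hpy : ∏ i ∈ g f, x i = x v2 * ∏ i ∈ f.erase v3, x i := by
      rw [hgdef]; exact Finset.prod_insert hnm
    have hsx : ∑ i ∈ f, x i ^ k = x v3 ^ k + ∑ i ∈ f.erase v3, x i ^ k :=
      (Finset.add_sum_erase _ _ (hBf f hf).2.1).symm
    have hpx : ∏ i ∈ f, x i = x v3 * ∏ i ∈ f.erase v3, x i :=
      (Finset.mul_prod_erase f x (hBf f hf).2.1).symm
    rw [hsy, hpy, hsx, hpx]; ring
  have hD0 : 0 ≤ qform k E' x - qform k E x := by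
    rw [hD]
    apply Finset.sum_nonneg
    intro f hf
    have h1 : x v3 ^ k ≤ x v2 ^ k := pow_le_pow_left₀ (hxpos v3).le hx23 k
    have h2 : 0 ≤ ∏ j ∈ f.erase v3, x j := Finset.prod_nonneg (fun j _ => (hxpos j).le)
    have h3 : 0 ≤ x v2 - x v3 := by linarith
    have h4 : 0 ≤ (k:ℝ) := by positivity
    have h5 : 0 ≤ (k:ℝ) * (x v2 - x v3) * ∏ j ∈ f.erase v3, x j :=
      mul_nonneg (mul_nonneg h4 h3) h2
    linarith
  -- key inequality : qform k E' y > q * (∑ v, y v ^ k)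
  have hkey : q * (∑ v, y v ^ k) < qform k E' y := by
    have hDel0 : 0 ≤ (x v2 + t)^k - x v2^k := by
      have := pow_le_pow_left₀ hcpos.le (by linarith : x v2 ≤ x v2 + t) k
      linarith
    have hDelle : (x v2 + t)^k - x v2^k ≤ k * t * (x v2 + t)^(k-1) :=
      aux_pow_sub_pow_le hcpos.le ht0.le k
    set R := max (q - ((E.filter (fun e => v2 ∈ e)).card + B'.card : ℝ)) 0 with hRdef
    have hRge : q - ((E.filter (fun e => v2 ∈ e)).card + B'.card : ℝ) ≤ R := le_max_left _ _
    have hR0 : (0:ℝ) ≤ R := le_max_right _ _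
    have hktpos : (0:ℝ) < k * t := by
      have : (0:ℝ) < k := by exact_mod_cast Nat.pos_of_ne_zero hk0
      positivity
    -- (q - d') * Δ < k t (Π + P)
    have hstep1 : (q - ((E.filter (fun e => v2 ∈ e)).card + B'.card : ℝ)) * ((x v2 + t)^k - x v2^k)
        ≤ R * ((x v2 + t)^k - x v2^k) := mul_le_mul_of_nonneg_right hRge hDel0
    have hstep2 : R * ((x v2 + t)^k - x v2^k) ≤ R * (k * t * (x v2 + t)^(k-1)) :=
      mul_le_mul_of_nonneg_left hDelle hR0
    have hstep3 : R * (k * t * (x v2 + t)^(k-1))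
        < k * t * ((∑ e ∈ E.filter (fun e => v2 ∈ e), ∏ j ∈ e.erase v2, x j)
          + ∑ f ∈ B', ∏ j ∈ f.erase v3, x j) := by
      have h := mul_lt_mul_of_pos_left htlt hktpos
      calc R * (k * t * (x v2 + t)^(k-1)) = (k*t) * (R * (x v2 + t)^(k-1)) := by ring
        _ < _ := h
    -- now put everything together
    rw [hynorm]
    have hy' : qform k E' y = (qform k E' y - qform k E' x)
        + (qform k E' x - qform k E x) + qform k E x := by ring
    rw [hy', hdiff1, hq]
    linarith [hD0, hstep1, hstep2, hstep3]
  -- normalize y to get a feasible vector for E'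
  have hspos : (0:ℝ) < ∑ v, y v ^ k := by
    rw [hynorm]
    have := pow_le_pow_left₀ hcpos.le (by linarith : x v2 ≤ x v2 + t) k
    linarith
  set r : ℝ := (∑ v, y v ^ k) ^ (-(1:ℝ)/k) with hrdef
  have hrpos : 0 < r := Real.rpow_pos_of_pos hspos _
  have hrk : r ^ k * (∑ v, y v ^ k) = 1 := by
    rw [hrdef, ← Real.rpow_natCast ((∑ v, y v ^ k) ^ (-(1:ℝ)/k)) k, ← Real.rpow_mul hspos.le]
    have hexp : (-(1:ℝ)/k) * k = -1 := by
      field_simp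
    rw [hexp, Real.rpow_neg_one]
    exact inv_mul_cancel₀ (ne_of_gt hspos)
  have hznorm : ∑ v, (r * y v) ^ k = 1 := by
    simp_rw [mul_pow]
    rw [← Finset.mul_sum]
    exact hrk
  have hzform : qform k E' (fun v => r * y v) = r ^ k * qform k E' y :=
    aux_qform_smul hunif' r y
  have hqz : q < qform k E' (fun v => r * y v) := by
    rw [hzform]
    have hrkpos : 0 < r ^ k := pow_pos hrpos k
    have h1 : r ^ k * (q * (∑ v, y v ^ k)) < r ^ k * qform k E' y :=
      mul_lt_mul_of_pos_left hkey hrkpos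
    have h2 : r ^ k * (q * (∑ v, y v ^ k)) = q := by
      rw [show r ^ k * (q * (∑ v, y v ^ k)) = q * (r ^ k * (∑ v, y v ^ k)) by ring, hrk, mul_one]
    linarith
  have hmem : qform k E' (fun v => r * y v)
      ∈ {s | ∃ z : V → ℝ, (∀ v, 0 ≤ z v) ∧ (∑ v, z v ^ k) = 1 ∧ s = qform k E' z} :=
    ⟨fun v => r * y v, fun v => mul_nonneg hrpos.le (hy0 v), hznorm, rfl⟩
  have hfinal : qform k E' (fun v => r * y v) ≤ qrad k E' :=
    le_csSup (aux_qrad_bddAbove hk0 E') hmem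
  exact lt_of_lt_of_le hqz hfinal


end SLT
end
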